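/- arXiv:1908.09030 — 5 statements merged into one kernel-verified Lean document; each statement's English description precedes it below -/
import Mathlib

section
/- Fix an integer k ≥ 2 and integers a, b, c with 0 ≤ a < b < c ≤ k. Let ρ_{a,b,c} be the polymatroid on the two-element set {e,f} with ρ(∅) = 0, ρ({e}) = b, ρ({f}) = c, and ρ({e,f}) = a + c. Then ρ_{a,b,c} is a k-polymatroid that is an excluded minor for the class Q_k of k-quotient polymatroids: ρ_{a,b,c} ∉ Q_k, but every minor of ρ_{a,b,c} obtained by deleting or contracting at least one element belongs to Q_k. -/
variable {α : Type*}

/-- `ρ` is an (integer) polymatroid on ground set `E`. -/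
def IsPolymatroidOn {β : Type*} [DecidableEq β] (E : Finset β) (ρ : Finset β → ℤ) : Prop :=
  ρ ∅ = 0 ∧
  (∀ A B : Finset β, A ⊆ B → B ⊆ E → ρ A ≤ ρ B) ∧
  (∀ A B : Finset β, A ⊆ E → B ⊆ E → ρ (A ∪ B) + ρ (A ∩ B) ≤ ρ A + ρ B)

/-- `r` is the rank function of a matroid on `E` (matroids are exactly the
`1`-polymatroids). -/
def IsMatroidRankOn {β : Type*} [DecidableEq β] (E : Finset β) (r : Finset β → ℤ) : Prop :=
  IsPolymatroidOn E r ∧ ∀ e ∈ E, r {e} ≤ 1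

/-- The matroid `Q` (rank function `rQ`) on `E` is a quotient of the matroid `L`
(rank function `rL`) on `E`: there are a matroid `N` on a ground set `E ∪ F` with
`F` disjoint from `E` (realized inside `α ⊕ ℕ`, which provides an unlimited supply
of fresh elements) such that `L = N∖F` and `Q = N/F`. -/
def IsQuotientOn [DecidableEq α] (E : Finset α) (rQ rL : Finset α → ℤ) : Prop :=
  ∃ (F : Finset (α ⊕ ℕ)) (rN : Finset (α ⊕ ℕ) → ℤ),
    Disjoint (E.map ⟨Sum.inl, Sum.inl_injective⟩) F ∧
    IsMatroidRankOn (E.map ⟨Sum.inl, Sum.inl_injective⟩ ∪ F) rN ∧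
    (∀ X ⊆ E, rL X = rN (X.map ⟨Sum.inl, Sum.inl_injective⟩)) ∧
    (∀ X ⊆ E, rQ X = rN (X.map ⟨Sum.inl, Sum.inl_injective⟩ ∪ F) - rN F)

/-- `ρ` belongs to the class `Q_k` of `k`-quotient polymatroids on `E`: it is a sum
of the rank functions of matroids `M_1, …, M_k` on `E` with each `M_{i+1}` a
quotient of `M_i`. -/
def MemQk [DecidableEq α] (k : ℕ) (E : Finset α) (ρ : Finset α → ℤ) : Prop :=
  ∃ M : Fin k → Finset α → ℤ,
    (∀ s, IsMatroidRankOn E (M s)) ∧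
    (∀ X ⊆ E, ρ X = ∑ s, M s X) ∧
    ∀ (s : Fin k) (h : (s : ℕ) + 1 < k), IsQuotientOn E (M ⟨(s : ℕ) + 1, h⟩) (M s)

/-- The polymatroid `ρ_{a,b,c}` on the two-element set `{e, f}`, taking values
`0`, `b`, `c`, `a+c` on `∅`, `{e}`, `{f}`, `{e,f}` respectively. -/
def rhoABC [DecidableEq α] (e f : α) (a b c : ℤ) : Finset α → ℤ :=
  fun A => if e ∈ A then (if f ∈ A then a + c else b) else (if f ∈ A then c else 0)

section Aux
variable {β : Type*} [DecidableEq β]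

lemma mat_zero (E : Finset β) : IsMatroidRankOn E (fun _ => (0:ℤ)) := by
  refine ⟨⟨rfl, ?_, ?_⟩, ?_⟩ <;> intros <;> simp

lemma mat_elem (E : Finset β) (z : β) :
    IsMatroidRankOn E (fun S => if z ∈ S then (1:ℤ) else 0) := by
  refine ⟨⟨by simp, ?_, ?_⟩, ?_⟩
  · intro A B hAB _
    by_cases hA : z ∈ A
    · simp [hA, hAB hA]
    · by_cases hB : z ∈ B <;> simp [hA, hB]
  · intro A B _ _
    by_cases hA : z ∈ A <;> by_cases hB : z ∈ B <;>
      simp [hA, hB, Finset.mem_union, Finset.mem_inter]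
  · intro x _
    dsimp only
    split_ifs <;> omega

lemma mat_one (E : Finset β) :
    IsMatroidRankOn E (fun S => if S.Nonempty then (1:ℤ) else 0) := by
  refine ⟨⟨by simp, ?_, ?_⟩, ?_⟩
  · intro A B hAB _
    by_cases hA : A.Nonempty
    · simp [hA, hA.mono hAB]
    · simp only [hA, if_false]
      split_ifs <;> omega
  · intro A B _ _
    by_cases hA : A.Nonempty
    · by_cases hB : B.Nonempty
      · have hU : (A ∪ B).Nonempty := hA.mono Finset.subset_union_left
        simp only [hA, hB, hU, if_true]
        split_ifs <;> omega
      · rw [Finset.not_nonempty_iff_eq_empty] at hB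
        subst hB; simp
    · rw [Finset.not_nonempty_iff_eq_empty] at hA
      subst hA; simp
  · intro x _
    dsimp only
    split_ifs <;> omega

end Aux
lemma quot_diff [DecidableEq α] {E : Finset α} {rQ rL : Finset α → ℤ}
    (h : IsQuotientOn E rQ rL) {Y X : Finset α} (hYX : Y ⊆ X) (hXE : X ⊆ E) :
    rQ X - rQ Y ≤ rL X - rL Y := by
  obtain ⟨F, rN, hdis, hmat, hL, hQ⟩ := h
  have hYE : Y ⊆ E := hYX.trans hXE
  rw [hL X hXE, hL Y hYE, hQ X hXE, hQ Y hYE]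
  have hXm : X.map (⟨Sum.inl, Sum.inl_injective⟩ : _ ↪ _ ⊕ ℕ) ⊆ E.map (⟨Sum.inl, Sum.inl_injective⟩ : _ ↪ _ ⊕ ℕ) :=
    Finset.map_subset_map.mpr hXE
  have hYm : Y.map (⟨Sum.inl, Sum.inl_injective⟩ : _ ↪ _ ⊕ ℕ) ⊆ E.map (⟨Sum.inl, Sum.inl_injective⟩ : _ ↪ _ ⊕ ℕ) :=
    Finset.map_subset_map.mpr hYE
  have hsub := hmat.1.2.2 (X.map (⟨Sum.inl, Sum.inl_injective⟩ : _ ↪ _ ⊕ ℕ))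
    (Y.map (⟨Sum.inl, Sum.inl_injective⟩ : _ ↪ _ ⊕ ℕ) ∪ F)
    (hXm.trans Finset.subset_union_left)
    (Finset.union_subset (hYm.trans Finset.subset_union_left) Finset.subset_union_right)
  have h1 : X.map (⟨Sum.inl, Sum.inl_injective⟩ : _ ↪ _ ⊕ ℕ) ∪ (Y.map (⟨Sum.inl, Sum.inl_injective⟩ : _ ↪ _ ⊕ ℕ) ∪ F)
      = X.map (⟨Sum.inl, Sum.inl_injective⟩ : _ ↪ _ ⊕ ℕ) ∪ F := by
    rw [← Finset.union_assoc,
      Finset.union_eq_left.mpr (Finset.map_subset_map.mpr hYX)]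
  have h2 : X.map (⟨Sum.inl, Sum.inl_injective⟩ : _ ↪ _ ⊕ ℕ) ∩ (Y.map (⟨Sum.inl, Sum.inl_injective⟩ : _ ↪ _ ⊕ ℕ) ∪ F)
      = Y.map (⟨Sum.inl, Sum.inl_injective⟩ : _ ↪ _ ⊕ ℕ) := by
    rw [Finset.inter_union_distrib_left,
      Finset.inter_eq_right.mpr (Finset.map_subset_map.mpr hYX),
      Finset.disjoint_iff_inter_eq_empty.mp (hdis.mono_left hXm), Finset.union_empty]
  rw [h1, h2] at hsub
  linarith

lemma sum_if_lt (k : ℕ) (m : ℤ) (h0 : 0 ≤ m) (hk : m ≤ (k:ℤ)) :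
    (∑ n ∈ Finset.range k, if (n:ℤ) < m then (1:ℤ) else 0) = m := by
  rw [← Finset.sum_filter]
  have h : (Finset.range k).filter (fun n : ℕ => (n:ℤ) < m) = Finset.range m.toNat := by
    ext n; simp only [Finset.mem_filter, Finset.mem_range]; omega
  rw [h, Finset.sum_const, Finset.card_range, nsmul_eq_mul, mul_one]
  omega

lemma anti_of_step {k : ℕ} {v : ℕ → ℤ} (hstep : ∀ n, n + 1 < k → v (n+1) ≤ v n) :
    ∀ i j, i ≤ j → j < k → v j ≤ v i := by
  intro i j
  induction j with
  | zero => intro h _; simp [Nat.le_zero.mp h]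
  | succ n ih =>
    intro hij hj
    rcases Nat.eq_or_lt_of_le hij with h | h
    · exact le_of_eq (by rw [h])
    · exact le_trans (hstep n hj) (ih (by omega) (by omega))

lemma ind_char {k : ℕ} {v : ℕ → ℤ} (hstep : ∀ n, n + 1 < k → v (n+1) ≤ v n)
    (h0 : ∀ n, n < k → 0 ≤ v n) (h1 : ∀ n, n < k → v n ≤ 1)
    {m : ℤ} (hsum : ∑ n ∈ Finset.range k, v n = m) {j : ℕ} (hj : j < k) :
    v j = if (j:ℤ) < m then 1 else 0 := by
  have hanti := anti_of_step hstep
  rw [Finset.range_eq_Ico] at hsum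
  split_ifs with hlt
  · by_contra hne
    have hv : v j ≤ 0 := by have := h1 j hj; have := h0 j hj; omega
    have hsplit : ∑ n ∈ Finset.Ico 0 j, v n + ∑ n ∈ Finset.Ico j k, v n
        = ∑ n ∈ Finset.Ico 0 k, v n :=
      Finset.sum_Ico_consecutive v (Nat.zero_le j) (le_of_lt hj)
    have e1 : ∑ n ∈ Finset.Ico 0 j, v n ≤ (j:ℤ) := by
      calc ∑ n ∈ Finset.Ico 0 j, v n ≤ (Finset.Ico 0 j).card • (1:ℤ) :=
            Finset.sum_le_card_nsmul _ _ _
              (fun x hx => h1 x (by simp only [Finset.mem_Ico] at hx; omega))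
        _ = (j:ℤ) := by simp [Nat.card_Ico]
    have e2 : ∑ n ∈ Finset.Ico j k, v n ≤ 0 :=
      Finset.sum_nonpos (fun x hx => by
        simp only [Finset.mem_Ico] at hx
        exact le_trans (hanti j x hx.1 hx.2) hv)
    linarith
  · push_neg at hlt
    by_contra hne
    have hv : 1 ≤ v j := by have := h0 j hj; omega
    have hsplit : ∑ n ∈ Finset.Ico 0 (j+1), v n + ∑ n ∈ Finset.Ico (j+1) k, v n
        = ∑ n ∈ Finset.Ico 0 k, v n :=
      Finset.sum_Ico_consecutive v (Nat.zero_le _) hj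
    have e1 : ((j:ℤ)+1) ≤ ∑ n ∈ Finset.Ico 0 (j+1), v n := by
      calc ((j:ℤ)+1) = (Finset.Ico 0 (j+1)).card • (1:ℤ) := by simp [Nat.card_Ico]
        _ ≤ ∑ n ∈ Finset.Ico 0 (j+1), v n :=
            Finset.card_nsmul_le_sum _ _ _
              (fun x hx => by
                simp only [Finset.mem_Ico] at hx
                exact le_trans hv (hanti x j (by omega) hj))
    have e2 : 0 ≤ ∑ n ∈ Finset.Ico (j+1) k, v n :=
      Finset.sum_nonneg (fun x hx => h0 x (by simp only [Finset.mem_Ico] at hx; omega))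
    linarith
lemma memQk_empty [DecidableEq α] (k : ℕ) (ρ : Finset α → ℤ) (h0 : ρ ∅ = 0) :
    MemQk k (∅ : Finset α) ρ := by
  refine ⟨fun _ _ => 0, fun _ => mat_zero _, ?_, ?_⟩
  · intro X hX
    rw [Finset.subset_empty.mp hX, h0]
    simp
  · intro s h
    refine ⟨∅, fun _ => 0, by simp, mat_zero _, fun X hX => rfl, fun X hX => by simp⟩

lemma memQk_single [DecidableEq α] (k : ℕ) (x : α) (ρ : Finset α → ℤ)
    (h0 : ρ ∅ = 0) (hm : 0 ≤ ρ {x}) (hk : ρ {x} ≤ (k:ℤ)) :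
    MemQk k ({x} : Finset α) ρ := by
  classical
  refine ⟨(fun s X => if x ∈ X ∧ ((s:ℕ):ℤ) < ρ {x} then 1 else 0 : Fin k → Finset α → ℤ), ?_, ?_, ?_⟩
  · intro s
    beta_reduce
    by_cases h : ((s:ℕ):ℤ) < ρ {x}
    · have he : (fun X : Finset α => if x ∈ X ∧ ((s:ℕ):ℤ) < ρ {x} then (1:ℤ) else 0)
          = fun X : Finset α => if x ∈ X then 1 else 0 := by
        funext X; simp [h]
      rw [he]; exact mat_elem _ x
    · have he : (fun X : Finset α => if x ∈ X ∧ ((s:ℕ):ℤ) < ρ {x} then (1:ℤ) else 0)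
          = fun _ => (0:ℤ) := by
        funext X; simp [h]
      rw [he]; exact mat_zero _
  · intro X hX
    rcases Finset.subset_singleton_iff.mp hX with rfl | rfl
    · simp [h0]
    · have h1 : (∑ s : Fin k, if x ∈ ({x}:Finset α) ∧ ((s:ℕ):ℤ) < ρ {x} then (1:ℤ) else 0)
          = ∑ n ∈ Finset.range k, (if (n:ℤ) < ρ {x} then (1:ℤ) else 0) := by
        rw [← Fin.sum_univ_eq_sum_range (fun n : ℕ => if (n:ℤ) < ρ {x} then (1:ℤ) else 0) k]
        exact Finset.sum_congr rfl fun s _ => by simp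
      rw [h1, sum_if_lt k (ρ {x}) hm hk]
  · intro s h
    by_cases h1 : ((s:ℕ):ℤ) + 1 < ρ {x}
    · have hs : ((s:ℕ):ℤ) < ρ {x} := by omega
      refine ⟨∅, fun S => if Sum.inl x ∈ S then (1:ℤ) else 0, by simp, mat_elem _ _, ?_, ?_⟩
      · intro X hX
        rcases Finset.subset_singleton_iff.mp hX with rfl | rfl <;> simp [hs]
      · intro X hX
        rcases Finset.subset_singleton_iff.mp hX with rfl | rfl <;>
          simp [h1]
    · by_cases h2 : ((s:ℕ):ℤ) < ρ {x}
      · refine ⟨{Sum.inr 0}, fun S => if S.Nonempty then (1:ℤ) else 0, by simp, mat_one _, ?_, ?_⟩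
        · intro X hX
          rcases Finset.subset_singleton_iff.mp hX with rfl | rfl <;> simp [h2]
        · intro X hX
          rcases Finset.subset_singleton_iff.mp hX with rfl | rfl <;> simp [h1, show (({Sum.inl x} ∪ {Sum.inr 0} : Finset (α ⊕ ℕ))).Nonempty from ⟨Sum.inl x, by simp⟩]
      · refine ⟨∅, fun _ => (0:ℤ), by simp, mat_zero _, ?_, ?_⟩
        · intro X hX
          rcases Finset.subset_singleton_iff.mp hX with rfl | rfl <;> simp [h2]
        · intro X hX
          have h3 : ¬ ((s:ℕ):ℤ) + 1 < ρ {x} := by omega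
          rcases Finset.subset_singleton_iff.mp hX with rfl | rfl <;> simp [h3]
theorem stmt15 [DecidableEq α] (k : ℕ) (hk : 2 ≤ k)
    (a b c : ℤ) (ha : 0 ≤ a) (hab : a < b) (hbc : b < c) (hck : c ≤ (k : ℤ))
    (e f : α) (hef : e ≠ f) :
    IsPolymatroidOn ({e, f} : Finset α) (rhoABC e f a b c) ∧
    (∀ x ∈ ({e, f} : Finset α), rhoABC e f a b c {x} ≤ (k : ℤ)) ∧
    ¬ MemQk k ({e, f} : Finset α) (rhoABC e f a b c) ∧
    (∀ A B : Finset α, A ⊆ ({e, f} : Finset α) → B ⊆ ({e, f} : Finset α) →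
      Disjoint A B → (A ∪ B).Nonempty →
      MemQk k (({e, f} : Finset α) \ (A ∪ B))
        (fun X => rhoABC e f a b c (X ∪ B) - rhoABC e f a b c B)) := by
  have hfe : f ≠ e := hef.symm
  refine ⟨⟨by simp [rhoABC], ?_, ?_⟩, ?_, ?_, ?_⟩
  · -- monotone
    intro A B hAB _
    by_cases h1 : e ∈ A
    · have h1' : e ∈ B := hAB h1
      by_cases h2 : f ∈ A
      · have h2' : f ∈ B := hAB h2
        simp [rhoABC, h1, h2, h1', h2']
      · by_cases h2' : f ∈ B <;> simp [rhoABC, h1, h2, h1', h2'] <;> omega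
    · by_cases h2 : f ∈ A
      · have h2' : f ∈ B := hAB h2
        by_cases h1' : e ∈ B <;> simp [rhoABC, h1, h2, h1', h2'] <;> omega
      · by_cases h1' : e ∈ B <;> by_cases h2' : f ∈ B <;>
          simp [rhoABC, h1, h2, h1', h2'] <;> omega
  · -- submodular
    intro A B _ _
    by_cases h1 : e ∈ A <;> by_cases h2 : f ∈ A <;> by_cases h3 : e ∈ B <;> by_cases h4 : f ∈ B <;>
      simp [rhoABC, Finset.mem_union, Finset.mem_inter, h1, h2, h3, h4] <;> omega
  · -- k-bounded
    intro x hx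
    rcases Finset.mem_insert.mp hx with rfl | hx
    · simp only [rhoABC, Finset.mem_singleton_self, if_true, hfe, Finset.mem_singleton, if_false]
      omega
    · rw [Finset.mem_singleton.mp hx]
      simp only [rhoABC, Finset.mem_singleton_self, Finset.mem_singleton, hef, if_false, if_true]
      omega
  · -- not in Q_k
    rintro ⟨M, hM, hsum, hq⟩
    have heE : ({e} : Finset α) ⊆ {e, f} := by simp
    have hfE : ({f} : Finset α) ⊆ {e, f} := by simp
    have hefE : ({e, f} : Finset α) ⊆ {e, f} := Finset.Subset.refl _
    have hz : ∀ s : Fin k, M s ∅ = 0 := fun s => (hM s).1.1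
    have hconv : ∀ X : Finset α, X ⊆ {e, f} →
        (∑ n ∈ Finset.range k, (if h : n < k then M ⟨n, h⟩ X else 0)) = rhoABC e f a b c X := by
      intro X hX
      rw [hsum X hX, ← Fin.sum_univ_eq_sum_range (fun n => if h : n < k then M ⟨n, h⟩ X else 0) k]
      exact Finset.sum_congr rfl fun s _ => by simp [s.isLt]
    have hsub_sum : ∀ X Y : Finset α, X ⊆ {e, f} → Y ⊆ {e, f} →
        (∑ n ∈ Finset.range k, (if h : n < k then M ⟨n, h⟩ X - M ⟨n, h⟩ Y else 0))
          = rhoABC e f a b c X - rhoABC e f a b c Y := by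
      intro X Y hX hY
      rw [← hconv X hX, ← hconv Y hY, ← Finset.sum_sub_distrib]
      exact Finset.sum_congr rfl fun n _ => by by_cases h : n < k <;> simp [h]
    have hdiff : ∀ (X Y : Finset α), Y ⊆ X → X ⊆ ({e, f} : Finset α) → ∀ n (hn : n + 1 < k),
        M ⟨n+1, hn⟩ X - M ⟨n+1, hn⟩ Y
          ≤ M ⟨n, Nat.lt_of_succ_lt hn⟩ X - M ⟨n, Nat.lt_of_succ_lt hn⟩ Y := by
      intro X Y hYX hXE n hn
      exact quot_diff (hq ⟨n, Nat.lt_of_succ_lt hn⟩ hn) hYX hXE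
    have char : ∀ (X Y : Finset α), Y ⊆ X → X ⊆ ({e, f} : Finset α) →
        (∀ j (hj : j < k), M ⟨j, hj⟩ X - M ⟨j, hj⟩ Y ≤ 1) →
        ∀ (m : ℤ),
        (∑ n ∈ Finset.range k, (if h : n < k then M ⟨n, h⟩ X - M ⟨n, h⟩ Y else 0)) = m →
        ∀ (j : ℕ) (hj : j < k),
        M ⟨j, hj⟩ X - M ⟨j, hj⟩ Y = if (j:ℤ) < m then 1 else 0 := by
      intro X Y hYX hXE hub m hm j hj
      have h := ind_char (v := fun n => if h : n < k then M ⟨n, h⟩ X - M ⟨n, h⟩ Y else 0)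
        (fun n hn => by
          beta_reduce
          rw [dif_pos hn, dif_pos (Nat.lt_of_succ_lt hn)]
          exact hdiff X Y hYX hXE n hn)
        (fun n hn => by
          beta_reduce
          rw [dif_pos hn]
          have := (hM ⟨n, hn⟩).1.2.1 Y X hYX hXE
          omega)
        (fun n hn => by beta_reduce; rw [dif_pos hn]; exact hub n hn)
        hm hj
      beta_reduce at h
      rw [dif_pos hj] at h
      exact h
    have hcup : ({e} : Finset α) ∪ {f} = {e, f} := by
      ext x; simp
    have hcap : ({e} : Finset α) ∩ {f} = ∅ := by
      ext x
      simp only [Finset.mem_inter, Finset.mem_singleton, Finset.notMem_empty, iff_false,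
        not_and]
      rintro rfl
      exact hef
    have hub_e : ∀ j (hj : j < k), M ⟨j, hj⟩ {e} - M ⟨j, hj⟩ ∅ ≤ 1 := by
      intro j hj
      have h1 := (hM ⟨j, hj⟩).2 e (by simp)
      have h2 := hz ⟨j, hj⟩
      omega
    have hub_f : ∀ j (hj : j < k), M ⟨j, hj⟩ {f} - M ⟨j, hj⟩ ∅ ≤ 1 := by
      intro j hj
      have h1 := (hM ⟨j, hj⟩).2 f (by simp)
      have h2 := hz ⟨j, hj⟩
      omega
    have hub_d : ∀ j (hj : j < k), M ⟨j, hj⟩ {e, f} - M ⟨j, hj⟩ {f} ≤ 1 := by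
      intro j hj
      have h1 := (hM ⟨j, hj⟩).1.2.2 {e} {f} heE hfE
      rw [hcup, hcap] at h1
      have h2 := hz ⟨j, hj⟩
      have h3 := (hM ⟨j, hj⟩).2 e (by simp)
      omega
    have hb' : (∑ n ∈ Finset.range k, (if h : n < k then M ⟨n, h⟩ {e} - M ⟨n, h⟩ ∅ else 0)) = b := by
      rw [hsub_sum {e} ∅ heE (Finset.empty_subset _)]
      simp [rhoABC, hfe]
    have hc' : (∑ n ∈ Finset.range k, (if h : n < k then M ⟨n, h⟩ {f} - M ⟨n, h⟩ ∅ else 0)) = c := by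
      rw [hsub_sum {f} ∅ hfE (Finset.empty_subset _)]
      simp [rhoABC, hef]
    have ha' : (∑ n ∈ Finset.range k,
        (if h : n < k then M ⟨n, h⟩ {e, f} - M ⟨n, h⟩ {f} else 0)) = a := by
      rw [hsub_sum {e, f} {f} hefE hfE]
      simp only [rhoABC, Finset.mem_insert, Finset.mem_singleton, hef]
      simp [hef, hfe]
    set na := a.toNat with hna_def
    set nb := b.toNat with hnb_def
    have hna : na < k := by omega
    have hnb : nb < k := by omega
    have te_a : M ⟨na, hna⟩ {e} - M ⟨na, hna⟩ ∅ = 1 := by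
      rw [char {e} ∅ (Finset.empty_subset _) heE hub_e b hb' na hna,
        if_pos (show ((na:ℕ):ℤ) < b by omega)]
    have te_b : M ⟨nb, hnb⟩ {e} - M ⟨nb, hnb⟩ ∅ = 0 := by
      rw [char {e} ∅ (Finset.empty_subset _) heE hub_e b hb' nb hnb,
        if_neg (show ¬ ((nb:ℕ):ℤ) < b by omega)]
    have tu_a : M ⟨na, hna⟩ {f} - M ⟨na, hna⟩ ∅ = 1 := by
      rw [char {f} ∅ (Finset.empty_subset _) hfE hub_f c hc' na hna,
        if_pos (show ((na:ℕ):ℤ) < c by omega)]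
    have tu_b : M ⟨nb, hnb⟩ {f} - M ⟨nb, hnb⟩ ∅ = 1 := by
      rw [char {f} ∅ (Finset.empty_subset _) hfE hub_f c hc' nb hnb,
        if_pos (show ((nb:ℕ):ℤ) < c by omega)]
    have td_a : M ⟨na, hna⟩ {e, f} - M ⟨na, hna⟩ {f} = 0 := by
      rw [char {e, f} {f} hfE hefE hub_d a ha' na hna,
        if_neg (show ¬ ((na:ℕ):ℤ) < a by omega)]
    have td_b : M ⟨nb, hnb⟩ {e, f} - M ⟨nb, hnb⟩ {f} = 0 := by
      rw [char {e, f} {f} hfE hefE hub_d a ha' nb hnb,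
        if_neg (show ¬ ((nb:ℕ):ℤ) < a by omega)]
    have hganti := anti_of_step
      (v := fun n => if h : n < k then M ⟨n, h⟩ {e, f} - M ⟨n, h⟩ {e} else 0)
      (fun n hn => by
        beta_reduce
        rw [dif_pos hn, dif_pos (Nat.lt_of_succ_lt hn)]
        exact hdiff {e, f} {e} heE hefE n hn)
      na nb (by omega) hnb
    beta_reduce at hganti
    rw [dif_pos hna, dif_pos hnb] at hganti
    have hza := hz ⟨na, hna⟩
    have hzb := hz ⟨nb, hnb⟩
    omega
  · -- minors in Q_k
    intro A B hA hB hdisj hne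
    by_cases he : e ∈ A ∪ B <;> by_cases hf : f ∈ A ∪ B
    · have hG : ({e, f} : Finset α) \ (A ∪ B) = ∅ := by
        rw [Finset.sdiff_eq_empty_iff_subset]
        intro x hx
        rcases Finset.mem_insert.mp hx with rfl | hx
        · exact he
        · rw [Finset.mem_singleton.mp hx]; exact hf
      rw [hG]
      exact memQk_empty k _ (by simp)
    · -- e removed, ground {f}
      have hG : ({e, f} : Finset α) \ (A ∪ B) = {f} := by
        ext x
        simp only [Finset.mem_sdiff, Finset.mem_insert, Finset.mem_singleton]
        constructor
        · rintro ⟨(rfl | rfl), hx⟩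
          · exact absurd he hx
          · rfl
        · rintro rfl
          exact ⟨Or.inr rfl, hf⟩
      rw [hG]
      have hfB : f ∉ B := fun h => hf (Finset.mem_union_right A h)
      refine memQk_single k f _ (by simp) ?_ ?_ <;> by_cases heB : e ∈ B <;>
        simp [rhoABC, Finset.mem_union, hef, hfe, heB, hfB] <;> omega
    · -- f removed, ground {e}
      have hG : ({e, f} : Finset α) \ (A ∪ B) = {e} := by
        ext x
        simp only [Finset.mem_sdiff, Finset.mem_insert, Finset.mem_singleton]
        constructor
        · rintro ⟨(rfl | rfl), hx⟩
          · rfl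
          · exact absurd hf hx
        · rintro rfl
          exact ⟨Or.inl rfl, he⟩
      rw [hG]
      have heB : e ∉ B := fun h => he (Finset.mem_union_right A h)
      refine memQk_single k e _ (by simp) ?_ ?_ <;> by_cases hfB : f ∈ B <;>
        simp [rhoABC, Finset.mem_union, hef, hfe, heB, hfB] <;> omega
    · obtain ⟨x, hx⟩ := hne
      have hx' := Finset.union_subset hA hB hx
      rcases Finset.mem_insert.mp hx' with rfl | hx''
      · exact absurd hx he
      · rw [Finset.mem_singleton.mp hx''] at hx
        exact absurd hx hf
end

section
/- Fix an integer k ≥ 2. Let ρ be a k-polymatroid on a finite set E that has no minor isomorphic to ρ_{a,b,c} for any integers 0 ≤ a < b < c ≤ k, where ρ_{a,b,c} is the polymatroid on a two-element set {e,f} with values 0, b, c, a+c on ∅, {e}, {f}, {e,f} respectively, and a minor of ρ on a two-element set is isomorphic to ρ_{a,b,c} if it equals ρ_{a,b,c} after some bijection of its ground set with {e,f}. Then ρ belongs to Q_k: there are matroids M_1,…,M_k on E with ρ(X) = r_{M_1}(X)+⋯+r_{M_k}(X) for all X ⊆ E and with M_{i+1} a quotient of M_i for each i ∈ {1,…,k−1}.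 -/
variable {α : Type*}

namespace Stmt16Aux

variable {β : Type*} [DecidableEq β]

/-- The increment of `ρ` at `x` over `B`. -/
def inc (ρ : Finset β → ℤ) (x : β) (B : Finset β) : ℤ := ρ (insert x B) - ρ B

/-- Greedy count of increments at least `j` along a list. -/
def glist (ρ : Finset β → ℤ) (j : ℤ) : List β → ℤ
  | [] => 0
  | x :: l => glist ρ j l + (if j ≤ inc ρ x l.toFinset then 1 else 0)

/-- The candidate `j`-th matroid rank function. -/
noncomputable def rj (ρ : Finset β → ℤ) (j : ℤ) (X : Finset β) : ℤ := glist ρ j X.toList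

section Basic

variable {E : Finset β} {ρ : Finset β → ℤ}

lemma inc_nonneg (hρ : IsPolymatroidOn E ρ) {x : β} {B : Finset β}
    (h : insert x B ⊆ E) : 0 ≤ inc ρ x B := by
  have := hρ.2.1 B (insert x B) (Finset.subset_insert x B) h
  simp only [inc]; omega

lemma inc_antitone (hρ : IsPolymatroidOn E ρ) {x : β} {B B' : Finset β}
    (hBB' : B ⊆ B') (hx : x ∉ B') (h : insert x B' ⊆ E) :
    inc ρ x B' ≤ inc ρ x B := by
  have h1 : insert x B ∪ B' = insert x B' := by
    ext z; simp only [Finset.mem_union, Finset.mem_insert]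
    constructor
    · rintro ((rfl | hz) | hz)
      · exact Or.inl rfl
      · exact Or.inr (hBB' hz)
      · exact Or.inr hz
    · rintro (rfl | hz)
      · exact Or.inl (Or.inl rfl)
      · exact Or.inr hz
  have h2 : insert x B ∩ B' = B := by
    ext z; simp only [Finset.mem_inter, Finset.mem_insert]
    constructor
    · rintro ⟨rfl | hz, hz'⟩
      · exact absurd hz' hx
      · exact hz
    · intro hz; exact ⟨Or.inr hz, hBB' hz⟩
  have hsub : insert x B ⊆ E := by
    intro z hz
    rcases Finset.mem_insert.mp hz with rfl | hz
    · exact h (Finset.mem_insert_self _ _)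
    · exact h (Finset.mem_insert_of_mem (hBB' hz))
  have hB'E : B' ⊆ E := fun z hz => h (Finset.mem_insert_of_mem hz)
  have := hρ.2.2 (insert x B) B' hsub hB'E
  rw [h1, h2] at this
  simp only [inc]; omega

lemma inc_le_single (hρ : IsPolymatroidOn E ρ) {x : β} {B : Finset β}
    (hx : x ∉ B) (h : insert x B ⊆ E) : inc ρ x B ≤ ρ {x} := by
  have := inc_antitone hρ (Finset.empty_subset B) hx h
  simpa [inc, hρ.1] using this

end Basic

lemma inc_pair_identity (ρ : Finset β → ℤ) {x y : β} (B : Finset β) :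
    inc ρ x (insert y B) + inc ρ y B = inc ρ y (insert x B) + inc ρ x B := by
  simp only [inc, Finset.insert_comm x y B]; ring

section Pair

variable {E : Finset β} {ρ : Finset β → ℤ} {k : ℕ}

variable (hρ : IsPolymatroidOn E ρ) (hkp : ∀ x ∈ E, ρ {x} ≤ (k : ℤ))
  (hnominor : ¬ ∃ (A B : Finset β) (x y : β) (a b c : ℤ),
      A ⊆ E ∧ B ⊆ E ∧ Disjoint A B ∧ E \ (A ∪ B) = {x, y} ∧ x ≠ y ∧
      0 ≤ a ∧ a < b ∧ b < c ∧ c ≤ (k : ℤ) ∧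
      ρ ({x} ∪ B) - ρ B = b ∧ ρ ({y} ∪ B) - ρ B = c ∧
      ρ ({x, y} ∪ B) - ρ B = a + c)

include hρ hkp hnominor

lemma pair_lt {x y : β} {B : Finset β} (hxy : x ≠ y) (hx : x ∈ E) (hy : y ∈ E)
    (hB : B ⊆ E) (hxB : x ∉ B) (hyB : y ∉ B) (hlt : inc ρ x B < inc ρ y B) :
    inc ρ x (insert y B) = inc ρ x B ∧ inc ρ y (insert x B) = inc ρ y B := by
  have hyE : insert y B ⊆ E := Finset.insert_subset hy hB
  have hxyE : insert x (insert y B) ⊆ E := Finset.insert_subset hx hyE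
  have hxE : insert x B ⊆ E := Finset.insert_subset hx hB
  have hxiy : x ∉ insert y B := by
    simp only [Finset.mem_insert]; push_neg; exact ⟨hxy, hxB⟩
  have hale : inc ρ x (insert y B) ≤ inc ρ x B :=
    inc_antitone hρ (Finset.subset_insert y B) hxiy hxyE
  have hage : ¬ (inc ρ x (insert y B) < inc ρ x B) := by
    intro hcon
    apply hnominor
    refine ⟨E \ (B ∪ {x, y}), B, x, y, inc ρ x (insert y B), inc ρ x B, inc ρ y B,
      Finset.sdiff_subset, hB, ?_, ?_, hxy, ?_, hcon, hlt, ?_, ?_, ?_, ?_⟩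
    · exact Finset.disjoint_left.mpr fun z hz hz' => by
        simp only [Finset.mem_sdiff, Finset.mem_union] at hz
        exact hz.2 (Or.inl hz')
    · have h1 : E \ (B ∪ {x, y}) ∪ B = E \ {x, y} := by
        ext z
        simp only [Finset.mem_union, Finset.mem_sdiff, Finset.mem_insert,
          Finset.mem_singleton]
        constructor
        · rintro (⟨hzE, hz⟩ | hzB)
          · push_neg at hz
            refine ⟨hzE, ?_⟩
            rintro (rfl | rfl)
            · exact hz.2.1 rfl
            · exact hz.2.2 rfl
          · refine ⟨hB hzB, ?_⟩
            rintro (rfl | rfl)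
            · exact hxB hzB
            · exact hyB hzB
        · rintro ⟨hzE, hz⟩
          by_cases hzB : z ∈ B
          · exact Or.inr hzB
          · refine Or.inl ⟨hzE, ?_⟩
            push_neg
            refine ⟨hzB, ?_, ?_⟩
            · intro h; exact hz (Or.inl h)
            · intro h; exact hz (Or.inr h)
      rw [h1, sdiff_sdiff_right_self, Finset.inf_eq_inter,
        Finset.inter_eq_right.mpr]
      intro z hz
      rcases Finset.mem_insert.mp hz with rfl | hz
      · exact hx
      · rw [Finset.mem_singleton] at hz; subst hz; exact hy
    · exact inc_nonneg hρ hxyE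
    · exact le_trans (inc_le_single hρ hyB hyE) (hkp y hy)
    · simp [inc]
    · simp [inc]
    · have h2 : {x, y} ∪ B = insert x (insert y B) := by
        ext z
        simp only [Finset.mem_union, Finset.mem_insert, Finset.mem_singleton]
        tauto
      rw [h2]
      simp only [inc]
      ring
  have h1 : inc ρ x (insert y B) = inc ρ x B := le_antisymm hale (by omega)
  refine ⟨h1, ?_⟩
  have := inc_pair_identity ρ (x := x) (y := y) B
  omega

lemma pair_swap {x y : β} {B : Finset β} (hxy : x ≠ y) (hx : x ∈ E) (hy : y ∈ E)
    (hB : B ⊆ E) (hxB : x ∉ B) (hyB : y ∉ B) (j : ℤ) :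
    (if j ≤ inc ρ y B then (1:ℤ) else 0) + (if j ≤ inc ρ x (insert y B) then 1 else 0)
      = (if j ≤ inc ρ x B then 1 else 0) + (if j ≤ inc ρ y (insert x B) then 1 else 0) := by
  rcases lt_trichotomy (inc ρ x B) (inc ρ y B) with h | h | h
  · obtain ⟨h1, h2⟩ := pair_lt hρ hkp hnominor hxy hx hy hB hxB hyB h
    rw [h1, h2]; ring
  · have := inc_pair_identity ρ (x := x) (y := y) B
    have h3 : inc ρ x (insert y B) = inc ρ y (insert x B) := by omega
    rw [h, h3]
  · obtain ⟨h1, h2⟩ := pair_lt hρ hkp hnominor hxy.symm hy hx hB hyB hxB h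
    rw [h1, h2]; ring

lemma glist_perm (j : ℤ) : ∀ {l₁ l₂ : List β}, l₁.Perm l₂ → l₁.Nodup →
    l₁.toFinset ⊆ E → glist ρ j l₁ = glist ρ j l₂ := by
  intro l₁ l₂ h
  induction h with
  | nil => intro _ _; rfl
  | cons x h ih =>
      intro hn hE
      simp only [glist]
      rw [ih (List.Nodup.of_cons hn)
        (fun z hz => hE (by
          simp only [List.toFinset_cons, Finset.mem_insert]
          exact Or.inr hz)), List.toFinset_eq_of_perm _ _ h]
  | swap x y l =>
      intro hn hE
      simp only [glist, List.toFinset_cons]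
      -- here the permutation is `y :: x :: l ~ x :: y :: l`
      simp only [List.nodup_cons, List.mem_cons] at hn
      have hxl : x ∉ l := fun h => hn.2.1 h
      have hyl : y ∉ l := fun h => hn.1 (Or.inr h)
      have hxy : x ≠ y := fun h => hn.1 (Or.inl h.symm)
      have hmem : ∀ z ∈ l, z ∈ E := fun z hz => hE (by
        simp only [List.toFinset_cons, Finset.mem_insert, List.mem_toFinset]
        exact Or.inr (Or.inr hz))
      have hlE : l.toFinset ⊆ E := fun z hz => hmem z (List.mem_toFinset.mp hz)
      have hxE : x ∈ E := hE (by simp)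
      have hyE : y ∈ E := hE (by simp)
      have hxtf : x ∉ l.toFinset := fun h => hxl (List.mem_toFinset.mp h)
      have hytf : y ∉ l.toFinset := fun h => hyl (List.mem_toFinset.mp h)
      have := pair_swap hρ hkp hnominor hxy hxE hyE hlE hxtf hytf j
      omega
  | trans h₁ h₂ ih₁ ih₂ =>
      intro hn hE
      rw [ih₁ hn hE, ih₂ (h₁.nodup_iff.mp hn)
        (by rw [← List.toFinset_eq_of_perm _ _ h₁]; exact hE)]

lemma rj_insert (j : ℤ) {x : β} {X : Finset β} (hx : x ∉ X) (hE : insert x X ⊆ E) :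
    rj ρ j (insert x X) = rj ρ j X + (if j ≤ inc ρ x X then 1 else 0) := by
  have hperm := Finset.toList_insert hx
  rw [rj, glist_perm hρ hkp hnominor j hperm (Finset.nodup_toList _)
    (by rw [Finset.toList_toFinset]; exact hE)]
  simp only [glist, Finset.toList_toFinset]
  rfl

lemma rj_mono_aux (j : ℤ) (D : Finset β) : ∀ X : Finset β, Disjoint D X → X ∪ D ⊆ E →
    rj ρ j X ≤ rj ρ j (X ∪ D) := by
  induction D using Finset.induction_on with
  | empty => intro X _ _; rw [Finset.union_empty]
  | @insert d D' hd ih =>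
      intro X hdisj hE'
      have hdX : d ∉ X := by
        have := Finset.disjoint_left.mp hdisj (Finset.mem_insert_self d D')
        exact this
      have heq : X ∪ insert d D' = insert d (X ∪ D') := by
        ext z; simp only [Finset.mem_union, Finset.mem_insert]; tauto
      have hdXD : d ∉ X ∪ D' := by
        simp only [Finset.mem_union]
        push_neg
        exact ⟨hdX, hd⟩
      rw [heq] at hE' ⊢
      rw [rj_insert hρ hkp hnominor j hdXD hE']
      have hsub : X ∪ D' ⊆ E := fun z hz => hE' (Finset.mem_insert_of_mem hz)
      have := ih X (Finset.disjoint_of_subset_left (Finset.subset_insert d D') hdisj) hsub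
      split <;> omega

lemma rj_mono (j : ℤ) {X Y : Finset β} (hXY : X ⊆ Y) (hYE : Y ⊆ E) :
    rj ρ j X ≤ rj ρ j Y := by
  have h := rj_mono_aux hρ hkp hnominor j (Y \ X) X Finset.sdiff_disjoint
    (by rw [Finset.union_sdiff_of_subset hXY]; exact hYE)
  rwa [Finset.union_sdiff_of_subset hXY] at h

lemma rj_quot_aux {j j' : ℤ} (hjj' : j ≤ j') (D : Finset β) :
    ∀ X : Finset β, Disjoint D X → X ∪ D ⊆ E →
    rj ρ j' (X ∪ D) - rj ρ j' X ≤ rj ρ j (X ∪ D) - rj ρ j X := by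
  induction D using Finset.induction_on with
  | empty => intro X _ _; rw [Finset.union_empty]; omega
  | @insert d D' hd ih =>
      intro X hdisj hE'
      have hdX : d ∉ X := Finset.disjoint_left.mp hdisj (Finset.mem_insert_self d D')
      have heq : X ∪ insert d D' = insert d (X ∪ D') := by
        ext z; simp only [Finset.mem_union, Finset.mem_insert]; tauto
      have hdXD : d ∉ X ∪ D' := by
        simp only [Finset.mem_union]; push_neg; exact ⟨hdX, hd⟩
      rw [heq] at hE' ⊢
      rw [rj_insert hρ hkp hnominor j hdXD hE', rj_insert hρ hkp hnominor j' hdXD hE']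
      have hsub : X ∪ D' ⊆ E := fun z hz => hE' (Finset.mem_insert_of_mem hz)
      have := ih X (Finset.disjoint_of_subset_left (Finset.subset_insert d D') hdisj) hsub
      split_ifs with h1 h2 h2 <;> omega

lemma rj_quot {j j' : ℤ} (hjj' : j ≤ j') {X Y : Finset β} (hXY : X ⊆ Y) (hYE : Y ⊆ E) :
    rj ρ j' Y - rj ρ j' X ≤ rj ρ j Y - rj ρ j X := by
  have h := rj_quot_aux hρ hkp hnominor hjj' (Y \ X) X Finset.sdiff_disjoint
    (by rw [Finset.union_sdiff_of_subset hXY]; exact hYE)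
  rwa [Finset.union_sdiff_of_subset hXY] at h

lemma rj_submod_aux (j : ℤ) (D : Finset β) :
    ∀ X Y : Finset β, X ⊆ Y → Disjoint D Y → Y ∪ D ⊆ E →
    rj ρ j (Y ∪ D) - rj ρ j Y ≤ rj ρ j (X ∪ D) - rj ρ j X := by
  induction D using Finset.induction_on with
  | empty => intro X Y _ _ _; rw [Finset.union_empty, Finset.union_empty]; omega
  | @insert d D' hd ih =>
      intro X Y hXY hdisj hE'
      have hdY : d ∉ Y := Finset.disjoint_left.mp hdisj (Finset.mem_insert_self d D')
      have heqY : Y ∪ insert d D' = insert d (Y ∪ D') := by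
        ext z; simp only [Finset.mem_union, Finset.mem_insert]; tauto
      have heqX : X ∪ insert d D' = insert d (X ∪ D') := by
        ext z; simp only [Finset.mem_union, Finset.mem_insert]; tauto
      have hdYD : d ∉ Y ∪ D' := by
        simp only [Finset.mem_union]; push_neg; exact ⟨hdY, hd⟩
      have hdXD : d ∉ X ∪ D' := by
        simp only [Finset.mem_union]
        push_neg
        exact ⟨fun h => hdY (hXY h), hd⟩
      rw [heqY] at hE' ⊢
      rw [heqX]
      have hsubY : Y ∪ D' ⊆ E := fun z hz => hE' (Finset.mem_insert_of_mem hz)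
      have hsubX : X ∪ D' ⊆ E := fun z hz =>
        hsubY (Finset.union_subset_union hXY (Finset.Subset.refl D') hz)
      have hEX : insert d (X ∪ D') ⊆ E := by
        intro z hz
        rcases Finset.mem_insert.mp hz with rfl | hz
        · exact hE' (Finset.mem_insert_self _ _)
        · exact hsubX hz
      rw [rj_insert hρ hkp hnominor j hdYD hE', rj_insert hρ hkp hnominor j hdXD hEX]
      have hanti : inc ρ d (Y ∪ D') ≤ inc ρ d (X ∪ D') :=
        inc_antitone hρ (Finset.union_subset_union hXY (Finset.Subset.refl D')) hdYD hE'
      have := ih X Y hXY (Finset.disjoint_of_subset_left (Finset.subset_insert d D') hdisj)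
        hsubY
      split_ifs with h1 h2 h2 <;> omega

lemma rj_submod (j : ℤ) {A B : Finset β} (hA : A ⊆ E) (hB : B ⊆ E) :
    rj ρ j (A ∪ B) + rj ρ j (A ∩ B) ≤ rj ρ j A + rj ρ j B := by
  have h1 : B ∪ A \ B = A ∪ B := by
    ext z; simp only [Finset.mem_union, Finset.mem_sdiff]; tauto
  have h2 : A ∩ B ∪ A \ B = A := by
    ext z; simp only [Finset.mem_union, Finset.mem_inter, Finset.mem_sdiff]; tauto
  have h := rj_submod_aux hρ hkp hnominor j (A \ B) (A ∩ B) B Finset.inter_subset_right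
    Finset.sdiff_disjoint (by rw [h1]; exact Finset.union_subset hA hB)
  rw [h1, h2] at h
  omega

omit hρ hkp hnominor in
lemma rj_empty (j : ℤ) : rj ρ j (∅ : Finset β) = 0 := by
  simp [rj, Finset.toList_empty, glist]

lemma rj_single (j : ℤ) {e : β} (he : e ∈ E) : rj ρ j {e} ≤ 1 := by
  have : ({e} : Finset β) = insert e ∅ := rfl
  rw [this, rj_insert hρ hkp hnominor j (Finset.notMem_empty e)
    (by simpa using he), rj_empty (ρ := ρ) j]
  split <;> omega

lemma rj_matroid (j : ℤ) : IsMatroidRankOn E (rj ρ j) := by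
  refine ⟨⟨rj_empty (ρ := ρ) j, ?_, ?_⟩, ?_⟩
  · intro A B hAB hBE; exact rj_mono hρ hkp hnominor j hAB hBE
  · intro A B hA hB; exact rj_submod hρ hkp hnominor j hA hB
  · intro e he; exact rj_single hρ hkp hnominor j he

end Pair

lemma sum_indicator : ∀ (k : ℕ) (c : ℤ), 0 ≤ c → c ≤ (k : ℤ) →
    (∑ s : Fin k, if ((s : ℕ) : ℤ) + 1 ≤ c then (1 : ℤ) else 0) = c := by
  intro k
  induction k with
  | zero => intro c h0 h1; simp only [Nat.cast_zero] at h1; simp; omega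
  | succ n ih =>
      intro c h0 h1
      rw [Fin.sum_univ_castSucc]
      simp only [Fin.coe_castSucc, Fin.val_last]
      by_cases hc : c ≤ (n : ℤ)
      · rw [if_neg (by omega), add_zero]
        exact ih c h0 hc
      · have hc' : c = (n : ℤ) + 1 := by push_cast at h1; omega
        rw [if_pos (by omega)]
        rw [Finset.sum_congr rfl
          (fun (s : Fin n) _ => if_pos (by have := s.isLt; omega :
            ((s : ℕ) : ℤ) + 1 ≤ c))]
        simp only [Finset.sum_const, Finset.card_univ, Fintype.card_fin,
          nsmul_eq_mul, mul_one]
        omega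

section Higgs

variable {γ : Type*} [DecidableEq γ]

/-- The `γ`-part of a subset of `γ ⊕ ℕ`, within `E`. -/
def XS (E : Finset γ) (S : Finset (γ ⊕ ℕ)) : Finset γ :=
  E.filter (fun a => Sum.inl a ∈ S)

/-- The Higgs-lift rank function. -/
def hrN (E : Finset γ) (rL rQ : Finset γ → ℤ) (d : ℤ) (F : Finset (γ ⊕ ℕ))
    (S : Finset (γ ⊕ ℕ)) : ℤ :=
  min (rL (XS E S) + ((S ∩ F).card : ℤ)) (rQ (XS E S) + d)

lemma XS_subset (E : Finset γ) (S : Finset (γ ⊕ ℕ)) : XS E S ⊆ E :=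
  Finset.filter_subset _ _

lemma XS_mono (E : Finset γ) {S T : Finset (γ ⊕ ℕ)} (h : S ⊆ T) : XS E S ⊆ XS E T := by
  intro z hz
  rw [XS, Finset.mem_filter] at hz ⊢
  exact ⟨hz.1, h hz.2⟩

lemma XS_union (E : Finset γ) (S T : Finset (γ ⊕ ℕ)) :
    XS E (S ∪ T) = XS E S ∪ XS E T := by
  ext z; simp only [XS, Finset.mem_filter, Finset.mem_union]; tauto

lemma XS_inter (E : Finset γ) (S T : Finset (γ ⊕ ℕ)) :
    XS E (S ∩ T) = XS E S ∩ XS E T := by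
  ext z; simp only [XS, Finset.mem_filter, Finset.mem_inter]; tauto

lemma higgs {E : Finset γ} {rL rQ : Finset γ → ℤ}
    (hL : IsMatroidRankOn E rL) (hQ : IsMatroidRankOn E rQ)
    (hq : ∀ X Y : Finset γ, X ⊆ Y → Y ⊆ E → rQ Y - rQ X ≤ rL Y - rL X) :
    IsQuotientOn E rQ rL := by
  classical
  obtain ⟨⟨hL0, hLmono, hLsub⟩, hL1⟩ := hL
  obtain ⟨⟨hQ0, hQmono, hQsub⟩, hQ1⟩ := hQ
  set d : ℤ := rL E - rQ E with hd_def
  have hd0 : 0 ≤ d := by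
    have := hq ∅ E (Finset.empty_subset E) (Finset.Subset.refl E)
    omega
  set F : Finset (γ ⊕ ℕ) := (Finset.range d.toNat).map ⟨Sum.inr, Sum.inr_injective⟩
    with hF_def
  have hFcard : ((F.card : ℤ)) = d := by
    simp [hF_def, Int.toNat_of_nonneg hd0]
  have hFinr : ∀ z ∈ F, ∃ n : ℕ, z = Sum.inr n := by
    intro z hz
    rw [hF_def, Finset.mem_map] at hz
    obtain ⟨n, _, rfl⟩ := hz
    exact ⟨n, rfl⟩
  have hinl_notF : ∀ a : γ, Sum.inl a ∉ F := by
    intro a ha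
    obtain ⟨n, hn⟩ := hFinr _ ha
    exact Sum.inl_ne_inr hn
  have hmap_inter_F : ∀ X : Finset γ,
      (X.map ⟨Sum.inl, Sum.inl_injective⟩) ∩ F = ∅ := by
    intro X
    rw [Finset.eq_empty_iff_forall_notMem]
    intro z hz
    rw [Finset.mem_inter, Finset.mem_map] at hz
    obtain ⟨⟨a, _, rfl⟩, hzF⟩ := hz
    exact hinl_notF a hzF
  have hXS_map : ∀ X : Finset γ, X ⊆ E →
      XS E (X.map ⟨Sum.inl, Sum.inl_injective⟩) = X := by
    intro X hX
    ext z
    simp only [XS, Finset.mem_filter, Finset.mem_map, Function.Embedding.coeFn_mk,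
      Sum.inl.injEq]
    constructor
    · rintro ⟨_, a, ha, rfl⟩; exact ha
    · intro hz; exact ⟨hX hz, z, hz, rfl⟩
  have hXS_mapF : ∀ X : Finset γ, X ⊆ E →
      XS E (X.map ⟨Sum.inl, Sum.inl_injective⟩ ∪ F) = X := by
    intro X hX
    rw [XS_union, hXS_map X hX]
    have : XS E F = ∅ := by
      rw [Finset.eq_empty_iff_forall_notMem]
      intro z hz
      rw [XS, Finset.mem_filter] at hz
      exact hinl_notF z hz.2
    rw [this, Finset.union_empty]
  have hQleL : ∀ X : Finset γ, X ⊆ E → rQ X ≤ rL X := by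
    intro X hX
    have := hq ∅ X (Finset.empty_subset X) hX
    omega
  have hdbound : ∀ X : Finset γ, X ⊆ E → rL X ≤ rQ X + d := by
    intro X hX
    have := hq X E hX (Finset.Subset.refl E)
    omega
  refine ⟨F, hrN E rL rQ d F, ?_, ⟨⟨?_, ?_, ?_⟩, ?_⟩, ?_, ?_⟩
  · -- disjointness
    rw [Finset.disjoint_left]
    intro z hz hzF
    rw [Finset.mem_map] at hz
    obtain ⟨a, _, rfl⟩ := hz
    exact hinl_notF a hzF
  · -- rN ∅ = 0
    have h1 : XS E (∅ : Finset (γ ⊕ ℕ)) = ∅ := by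
      simp [XS]
    rw [hrN, h1, Finset.empty_inter, hL0, hQ0]
    simp
    omega
  · -- monotone
    intro A B hAB _
    rw [hrN, hrN]
    apply min_le_min
    · apply add_le_add
      · exact hLmono _ _ (XS_mono E hAB) (XS_subset E B)
      · exact_mod_cast Finset.card_le_card (Finset.inter_subset_inter_right hAB)
    · apply add_le_add_left
      exact hQmono _ _ (XS_mono E hAB) (XS_subset E B)
  · -- submodular
    intro A B _ _
    have hXu := XS_union E A B
    have hXi := XS_inter E A B
    have hcard : (((A ∪ B) ∩ F).card : ℤ) + (((A ∩ B) ∩ F).card : ℤ)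
        = ((A ∩ F).card : ℤ) + ((B ∩ F).card : ℤ) := by
      have h1 : (A ∪ B) ∩ F = (A ∩ F) ∪ (B ∩ F) := Finset.union_inter_distrib_right A B F
      have h2 : (A ∩ B) ∩ F = (A ∩ F) ∩ (B ∩ F) := by
        ext z; simp only [Finset.mem_inter]; tauto
      rw [h1, h2]
      exact_mod_cast Finset.card_union_add_card_inter (A ∩ F) (B ∩ F)
    have hLs := hLsub (XS E A) (XS E B) (XS_subset E A) (XS_subset E B)
    have hQs := hQsub (XS E A) (XS E B) (XS_subset E A) (XS_subset E B)
    have hqA : rQ (XS E A ∪ XS E B) - rQ (XS E B) ≤ rL (XS E A ∪ XS E B) - rL (XS E B) :=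
      hq (XS E B) (XS E A ∪ XS E B) Finset.subset_union_right
        (Finset.union_subset (XS_subset E A) (XS_subset E B))
    have hqB : rQ (XS E A ∪ XS E B) - rQ (XS E A) ≤ rL (XS E A ∪ XS E B) - rL (XS E A) :=
      hq (XS E A) (XS E A ∪ XS E B) Finset.subset_union_left
        (Finset.union_subset (XS_subset E A) (XS_subset E B))
    have hcAB : (((A ∩ B) ∩ F).card : ℤ) ≤ ((A ∩ F).card : ℤ) := by
      exact_mod_cast Finset.card_le_card
        (Finset.inter_subset_inter_right Finset.inter_subset_left)
    have hcBA : (((A ∩ B) ∩ F).card : ℤ) ≤ ((B ∩ F).card : ℤ) := by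
      exact_mod_cast Finset.card_le_card
        (Finset.inter_subset_inter_right Finset.inter_subset_right)
    simp only [hrN, hXu, hXi]
    rcases le_total (rL (XS E A) + ((A ∩ F).card : ℤ)) (rQ (XS E A) + d) with h1 | h1 <;>
      rcases le_total (rL (XS E B) + ((B ∩ F).card : ℤ)) (rQ (XS E B) + d) with h2 | h2
    · rw [min_eq_left h1, min_eq_left h2]
      have b1 := min_le_left (rL (XS E A ∪ XS E B) + (((A ∪ B) ∩ F).card : ℤ))
        (rQ (XS E A ∪ XS E B) + d)
      have b2 := min_le_left (rL (XS E A ∩ XS E B) + (((A ∩ B) ∩ F).card : ℤ))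
        (rQ (XS E A ∩ XS E B) + d)
      omega
    · rw [min_eq_left h1, min_eq_right h2]
      have b1 := min_le_right (rL (XS E A ∪ XS E B) + (((A ∪ B) ∩ F).card : ℤ))
        (rQ (XS E A ∪ XS E B) + d)
      have b2 := min_le_left (rL (XS E A ∩ XS E B) + (((A ∩ B) ∩ F).card : ℤ))
        (rQ (XS E A ∩ XS E B) + d)
      omega
    · rw [min_eq_right h1, min_eq_left h2]
      have b1 := min_le_right (rL (XS E A ∪ XS E B) + (((A ∪ B) ∩ F).card : ℤ))
        (rQ (XS E A ∪ XS E B) + d)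
      have b2 := min_le_left (rL (XS E A ∩ XS E B) + (((A ∩ B) ∩ F).card : ℤ))
        (rQ (XS E A ∩ XS E B) + d)
      omega
    · rw [min_eq_right h1, min_eq_right h2]
      have b1 := min_le_right (rL (XS E A ∪ XS E B) + (((A ∪ B) ∩ F).card : ℤ))
        (rQ (XS E A ∪ XS E B) + d)
      have b2 := min_le_right (rL (XS E A ∩ XS E B) + (((A ∩ B) ∩ F).card : ℤ))
        (rQ (XS E A ∩ XS E B) + d)
      omega
  · -- singletons
    intro e he
    rw [Finset.mem_union] at he
    rcases he with he | he
    · rw [Finset.mem_map] at he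
      obtain ⟨a, haE, rfl⟩ := he
      simp only [Function.Embedding.coeFn_mk]
      have h1 : XS E {Sum.inl a} = {a} := by
        ext z
        simp only [XS, Finset.mem_filter, Finset.mem_singleton, Sum.inl.injEq]
        constructor
        · rintro ⟨_, rfl⟩; rfl
        · rintro rfl; exact ⟨haE, rfl⟩
      have h2 : ({Sum.inl a} : Finset (γ ⊕ ℕ)) ∩ F = ∅ := by
        rw [Finset.eq_empty_iff_forall_notMem]
        intro z hz
        rw [Finset.mem_inter, Finset.mem_singleton] at hz
        obtain ⟨rfl, hzF⟩ := hz
        exact hinl_notF a hzF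
      rw [hrN, h1, h2]
      simp only [Finset.card_empty, Nat.cast_zero, add_zero]
      have := hL1 a haE
      have := min_le_left (rL {a}) (rQ {a} + d)
      omega
    · obtain ⟨n, rfl⟩ := hFinr _ he
      have h1 : XS E {Sum.inr n} = (∅ : Finset γ) := by
        rw [Finset.eq_empty_iff_forall_notMem]
        intro z hz
        rw [XS, Finset.mem_filter, Finset.mem_singleton] at hz
        exact Sum.inl_ne_inr hz.2
      have h2 : ({Sum.inr n} : Finset (γ ⊕ ℕ)) ∩ F = {Sum.inr n} := by
        rw [Finset.inter_eq_left, Finset.singleton_subset_iff]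
        exact he
      rw [hrN, h1, h2, hL0]
      simp only [Finset.card_singleton, Nat.cast_one]
      have := min_le_left ((0 : ℤ) + 1) (rQ ∅ + d)
      omega
  · -- deletion
    intro X hX
    rw [hrN, hXS_map X hX, hmap_inter_F X]
    simp only [Finset.card_empty, Nat.cast_zero, add_zero]
    exact (min_eq_left (hdbound X hX)).symm
  · -- contraction
    intro X hX
    have hFF : XS E F = ∅ := by
      rw [Finset.eq_empty_iff_forall_notMem]
      intro z hz
      rw [XS, Finset.mem_filter] at hz
      exact hinl_notF z hz.2
    have hcup : (X.map ⟨Sum.inl, Sum.inl_injective⟩ ∪ F) ∩ F = F := by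
      rw [Finset.union_inter_distrib_right, hmap_inter_F X, Finset.empty_union,
        Finset.inter_self]
    have hrNF : hrN E rL rQ d F F = d := by
      rw [hrN, hFF, Finset.inter_self, hL0, hQ0, hFcard]
      simp
    rw [hrNF, hrN, hXS_mapF X hX, hcup, hFcard]
    have := hQleL X hX
    rw [min_eq_right (by omega)]
    ring

end Higgs

end Stmt16Aux

theorem stmt16 [DecidableEq α] (k : ℕ) (hk : 2 ≤ k)
    (E : Finset α) (ρ : Finset α → ℤ)
    (hρ : IsPolymatroidOn E ρ) (hkp : ∀ x ∈ E, ρ {x} ≤ (k : ℤ))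
    (hnominor : ¬ ∃ (A B : Finset α) (x y : α) (a b c : ℤ),
      A ⊆ E ∧ B ⊆ E ∧ Disjoint A B ∧ E \ (A ∪ B) = {x, y} ∧ x ≠ y ∧
      0 ≤ a ∧ a < b ∧ b < c ∧ c ≤ (k : ℤ) ∧
      ρ ({x} ∪ B) - ρ B = b ∧ ρ ({y} ∪ B) - ρ B = c ∧
      ρ ({x, y} ∪ B) - ρ B = a + c) :
    MemQk k E ρ := by
  classical
  refine ⟨fun s => Stmt16Aux.rj ρ (((s : ℕ) : ℤ) + 1),
    fun s => Stmt16Aux.rj_matroid hρ hkp hnominor _, ?_, ?_⟩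
  · intro X hX
    induction X using Finset.induction_on with
    | empty =>
        simp only [Stmt16Aux.rj_empty (ρ := ρ), hρ.1, Finset.sum_const_zero]
    | @insert x X hx ih =>
        have hXE : X ⊆ E := fun z hz => hX (Finset.mem_insert_of_mem hz)
        have hxE : x ∈ E := hX (Finset.mem_insert_self _ _)
        rw [Finset.sum_congr rfl
          (fun s _ => Stmt16Aux.rj_insert hρ hkp hnominor _ hx hX),
          Finset.sum_add_distrib, ← ih hXE]
        have hc0 : 0 ≤ Stmt16Aux.inc ρ x X := Stmt16Aux.inc_nonneg hρ hX
        have hck : Stmt16Aux.inc ρ x X ≤ (k : ℤ) :=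
          le_trans (Stmt16Aux.inc_le_single hρ hx hX) (hkp x hxE)
        rw [Stmt16Aux.sum_indicator k (Stmt16Aux.inc ρ x X) hc0 hck]
        simp only [Stmt16Aux.inc]
        ring
  · intro s h
    apply Stmt16Aux.higgs (Stmt16Aux.rj_matroid hρ hkp hnominor _)
      (Stmt16Aux.rj_matroid hρ hkp hnominor _)
    intro X Y hXY hYE
    exact Stmt16Aux.rj_quot hρ hkp hnominor (by push_cast; omega) hXY hYE
end

section
/- A polymatroid ρ on a finite set E belongs to Q = ⋃_{k≥2} Q_k (i.e., ρ is a k-quotient polymatroid for some k ≥ 2) if and only if ρ has no minor isomorphic to ρ_{a,b,c} for any nonnegative integers a < b < c, where ρ_{a,b,c} is the polymatroid on a two-element set {e,f} with values 0, b, c, a+c on ∅, {e}, {f}, {e,f} respectively, and a minor of ρ on a two-element set is isomorphic to ρ_{a,b,c} if it equals ρ_{a,b,c} after some bijection of its ground set with {e,f}. -/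
variable {α : Type*}

namespace Stmt17Aux
variable [DecidableEq α]



/-- marginal -/
def dm (ρ : Finset α → ℤ) (B : Finset α) (x : α) : ℤ := ρ (insert x B) - ρ B

section basic
variable {E : Finset α} {ρ : Finset α → ℤ}

theorem dm_nonneg (hρ : IsPolymatroidOn E ρ) {B : Finset α} {x : α} (hB : B ⊆ E) (hx : x ∈ E) : 0 ≤ dm ρ B x := by
  have := hρ.2.1 B (insert x B) (Finset.subset_insert _ _) (Finset.insert_subset hx hB)
  simp [dm]; omega

theorem dm_submod (hρ : IsPolymatroidOn E ρ) {B B' : Finset α} {x : α} (hBB : B ⊆ B') (hB' : B' ⊆ E) (hx : x ∈ E)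
    (hxB' : x ∉ B') : dm ρ B' x ≤ dm ρ B x := by
  have h := hρ.2.2 (insert x B) B' (Finset.insert_subset hx (hBB.trans hB')) hB'
  have h1 : insert x B ∪ B' = insert x B' := by
    rw [Finset.insert_union, Finset.union_eq_right.2 hBB]
  have h2 : insert x B ∩ B' = B := by
    ext a
    simp only [Finset.mem_inter, Finset.mem_insert]
    constructor
    · rintro ⟨h | h, hb⟩
      · exact absurd (h ▸ hb) hxB'
      · exact h
    · exact fun h => ⟨Or.inr h, hBB h⟩
  rw [h1, h2] at h
  simp only [dm]; omega

theorem dm_identity (ρ : Finset α → ℤ) {B : Finset α} (x y : α) :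
    dm ρ B x + dm ρ (insert x B) y = dm ρ B y + dm ρ (insert y B) x := by
  simp only [dm, Finset.insert_comm x y]; ring

end basic

/-- the exclusion condition, in convenient form -/
def Star (E : Finset α) (ρ : Finset α → ℤ) : Prop :=
  ∀ B ⊆ E, ∀ x ∈ E, ∀ y ∈ E, x ∉ B → y ∉ B → x ≠ y →
    dm ρ B x < dm ρ B y → dm ρ (insert y B) x = dm ρ B x

section star
variable {E : Finset α} {ρ : Finset α → ℤ}

/-- swap identity -/
theorem swap_min (hρ : IsPolymatroidOn E ρ) (hs : Star E ρ) (i : ℤ) {B : Finset α} {x y : α} (hB : B ⊆ E) (hx : x ∈ E) (hy : y ∈ E)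
    (hxB : x ∉ B) (hyB : y ∉ B) (hxy : x ≠ y) :
    min i (dm ρ B x) + min i (dm ρ (insert x B) y)
      = min i (dm ρ B y) + min i (dm ρ (insert y B) x) := by
  have hid := dm_identity ρ (B := B) x y
  rcases lt_trichotomy (dm ρ B x) (dm ρ B y) with h | h | h
  · have ha := hs B hB x hx y hy hxB hyB hxy h
    omega
  · omega
  · have ha := hs B hB y hy x hx hyB hxB hxy.symm h
    omega

/-- marginal sum along a list -/
def msum (ρ : Finset α → ℤ) (i : ℤ) : List α → ℤ
  | [] => 0
  | x :: t => msum ρ i t + min i (dm ρ t.toFinset x)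

theorem msum_perm (hρ : IsPolymatroidOn E ρ) (hs : Star E ρ) (i : ℤ) : ∀ {l₁ l₂ : List α}, l₁.Perm l₂ → l₁.Nodup →
    (∀ a ∈ l₁, a ∈ E) → msum ρ i l₁ = msum ρ i l₂ := by
  intro l₁ l₂ hp
  induction hp with
  | nil => intro _ _; rfl
  | cons x hp ih =>
      intro hnd hmem
      simp only [msum]
      rw [ih (List.Nodup.of_cons hnd) (fun a ha => hmem a (by simp [ha])), List.toFinset_eq_of_perm _ _ hp]
  | swap x y l =>
      intro hnd hmem
      have hyl : y ∉ l := by simp at hnd; tauto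
      have hxl : x ∉ l := by simp at hnd; tauto
      have hxy : y ≠ x := by simp at hnd; tauto
      have hyE : y ∈ E := hmem y (by simp)
      have hxE : x ∈ E := hmem x (by simp)
      have hlE : l.toFinset ⊆ E := by
        intro a ha; exact hmem a (by simp at ha; simp [ha])
      have hynF : y ∉ l.toFinset := by simpa using hyl
      have hxnF : x ∉ l.toFinset := by simpa using hxl
      simp only [msum, List.toFinset_cons]
      have := swap_min hρ hs i hlE hyE hxE hynF hxnF hxy
      omega
  | trans p₁ p₂ ih₁ ih₂ =>
      intro hnd hmem
      rw [ih₁ hnd hmem, ih₂ (p₁.nodup hnd) (fun a ha => hmem a (p₁.mem_iff.2 ha))]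

/-- the partial-sum polymatroid -/
noncomputable def Sf (ρ : Finset α → ℤ) (i : ℤ) (X : Finset α) : ℤ := msum ρ i X.toList

theorem Sf_empty (ρ : Finset α → ℤ) (i : ℤ) : Sf ρ i ∅ = 0 := by
  simp [Sf, msum]

theorem Sf_insert (hρ : IsPolymatroidOn E ρ) (hs : Star E ρ) (i : ℤ) {X : Finset α} {x : α} (hX : X ⊆ E) (hx : x ∈ E) (hxX : x ∉ X) :
    Sf ρ i (insert x X) = Sf ρ i X + min i (dm ρ X x) := by
  have hperm := Finset.toList_insert hxX
  have h1 : msum ρ i (insert x X).toList = msum ρ i (x :: X.toList) := by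
    refine msum_perm hρ hs i hperm (Finset.nodup_toList _) ?_
    intro a ha
    rw [Finset.mem_toList] at ha
    rcases Finset.mem_insert.1 ha with h | h
    · exact h ▸ hx
    · exact hX h
  rw [Sf, h1]
  simp only [msum, Finset.toList_toFinset]
  rfl

end star


/-- monotonicity from nonnegative marginals -/
theorem mono_of_marg {E : Finset α} {f : Finset α → ℤ}
    (hm : ∀ X ⊆ E, ∀ x ∈ E, x ∉ X → 0 ≤ f (insert x X) - f X) :
    ∀ A B : Finset α, A ⊆ B → B ⊆ E → f A ≤ f B := by
  suffices h : ∀ n (A B : Finset α), (B \ A).card ≤ n → A ⊆ B → B ⊆ E → f A ≤ f B by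
    intro A B hAB hBE; exact h (B \ A).card A B le_rfl hAB hBE
  intro n
  induction n with
  | zero =>
      intro A B hc hAB hBE
      have : B \ A = ∅ := Finset.card_eq_zero.1 (Nat.le_zero.1 hc)
      have : B ⊆ A := Finset.sdiff_eq_empty_iff_subset.1 this
      rw [Finset.Subset.antisymm hAB this]
  | succ n ih =>
      intro A B hc hAB hBE
      by_cases hBA : B ⊆ A
      · rw [Finset.Subset.antisymm hAB hBA]
      · obtain ⟨x, hx⟩ := Finset.not_subset.1 hBA
        have hxBA : x ∈ B \ A := Finset.mem_sdiff.2 ⟨hx.1, hx.2⟩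
        have h1 : f A ≤ f (insert x A) := by
          have := hm A (hAB.trans hBE) x (hBE hx.1) hx.2; omega
        have h2 : f (insert x A) ≤ f B := by
          apply ih (insert x A) B _ (Finset.insert_subset hx.1 hAB) hBE
          have : B \ insert x A = (B \ A).erase x := by
            ext a; simp [Finset.mem_sdiff, Finset.mem_erase, Finset.mem_insert]; tauto
          rw [this, Finset.card_erase_of_mem hxBA]
          omega
        omega

/-- submodularity from decreasing marginals -/
theorem submod_of_marg {E : Finset α} {f : Finset α → ℤ}
    (hm : ∀ X X' : Finset α, X ⊆ X' → X' ⊆ E → ∀ x ∈ E, x ∉ X' →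
      f (insert x X') - f X' ≤ f (insert x X) - f X) :
    ∀ A B : Finset α, A ⊆ E → B ⊆ E → f (A ∪ B) + f (A ∩ B) ≤ f A + f B := by
  suffices h : ∀ n (A B : Finset α), (A \ B).card ≤ n → A ⊆ E → B ⊆ E →
      f (A ∪ B) + f (A ∩ B) ≤ f A + f B by
    intro A B hA hB; exact h (A \ B).card A B le_rfl hA hB
  intro n
  induction n with
  | zero =>
      intro A B hc hA hB
      have hAB : A ⊆ B := Finset.sdiff_eq_empty_iff_subset.1 (Finset.card_eq_zero.1 (Nat.le_zero.1 hc))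
      rw [Finset.union_eq_right.2 hAB, Finset.inter_eq_left.2 hAB]
      omega
  | succ n ih =>
      intro A B hc hA hB
      by_cases hAB : A ⊆ B
      · rw [Finset.union_eq_right.2 hAB, Finset.inter_eq_left.2 hAB]; omega
      · obtain ⟨x, hx⟩ := Finset.not_subset.1 hAB
        set A' := A.erase x with hA'
        have hxA : x ∈ A := hx.1
        have hins : insert x A' = A := Finset.insert_erase hxA
        have hxA' : x ∉ A' := Finset.notMem_erase _ _
        have hxA'B : x ∉ A' ∪ B := by simp [Finset.mem_union, hxA', hx.2]
        have hU : A ∪ B = insert x (A' ∪ B) := by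
          rw [← hins, Finset.insert_union]
        have hI : A ∩ B = A' ∩ B := by
          ext a; simp only [Finset.mem_inter, hA', Finset.mem_erase]
          constructor
          · rintro ⟨h1, h2⟩; exact ⟨⟨fun he => hx.2 (he ▸ h2), h1⟩, h2⟩
          · rintro ⟨⟨_, h1⟩, h2⟩; exact ⟨h1, h2⟩
        have hsub : A' ⊆ A' ∪ B := Finset.subset_union_left
        have hA'E : A' ⊆ E := (Finset.erase_subset _ _).trans hA
        have hA'BE : A' ∪ B ⊆ E := Finset.union_subset hA'E hB
        have h1 : f (insert x (A' ∪ B)) - f (A' ∪ B) ≤ f (insert x A') - f A' :=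
          hm A' (A' ∪ B) hsub hA'BE x (hA hxA) hxA'B
        have h2 : f (A' ∪ B) + f (A' ∩ B) ≤ f A' + f B := by
          apply ih A' B _ hA'E hB
          have : A' \ B = (A \ B).erase x := by
            ext a; simp [hA', Finset.mem_sdiff, Finset.mem_erase]; tauto
          rw [this, Finset.card_erase_of_mem (Finset.mem_sdiff.2 hx)]
          omega
        rw [hU, hI]
        rw [← hins] at *
        omega



theorem isQuotientOn_of_diff {E : Finset α} {L Q : Finset α → ℤ}
    (hL : IsMatroidRankOn E L) (hQ : IsMatroidRankOn E Q)
    (hdiff : ∀ X X' : Finset α, X ⊆ X' → X' ⊆ E → Q X' - Q X ≤ L X' - L X) :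
    IsQuotientOn E Q L := by
  classical
  set emb : α ↪ α ⊕ ℕ := ⟨Sum.inl, Sum.inl_injective⟩ with hemb
  set d0 : ℤ := L E - Q E with hd0
  have hQle : ∀ X ⊆ E, Q X ≤ L X := by
    intro X hX
    have := hdiff ∅ X (Finset.empty_subset _) hX
    have h1 := hL.1.1; have h2 := hQ.1.1
    omega
  have hd0n : 0 ≤ d0 := by
    have := hQle E le_rfl; omega
  set dN : ℕ := d0.toNat with hdN
  have hdNe : (dN : ℤ) = d0 := Int.toNat_of_nonneg hd0n
  set F : Finset (α ⊕ ℕ) := (Finset.range dN).map ⟨Sum.inr, Sum.inr_injective⟩ with hF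
  set pre : Finset (α ⊕ ℕ) → Finset α := fun Z => E.filter (fun a => Sum.inl a ∈ Z) with hpre
  set cR : Finset (α ⊕ ℕ) → ℤ :=
    fun Z => ((Z.filter (fun s => s.isRight = true)).card : ℤ) with hcR
  set rN : Finset (α ⊕ ℕ) → ℤ :=
    fun Z => min (L (pre Z) + cR Z) (Q (pre Z) + d0) with hrN
  have hpre_sub : ∀ Z, pre Z ⊆ E := fun Z => Finset.filter_subset _ _
  have hpre_mono : ∀ {Z Z'}, Z ⊆ Z' → pre Z ⊆ pre Z' := by
    intro Z Z' h a ha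
    simp only [hpre, Finset.mem_filter] at *
    exact ⟨ha.1, h ha.2⟩
  have hpre_union : ∀ Z Z', pre (Z ∪ Z') = pre Z ∪ pre Z' := by
    intro Z Z'; ext a
    simp only [hpre, Finset.mem_filter, Finset.mem_union]; tauto
  have hpre_inter : ∀ Z Z', pre (Z ∩ Z') = pre Z ∩ pre Z' := by
    intro Z Z'; ext a
    simp only [hpre, Finset.mem_filter, Finset.mem_inter]; tauto
  have hcR_mono : ∀ {Z Z'}, Z ⊆ Z' → cR Z ≤ cR Z' := by
    intro Z Z' h
    simp only [hcR]
    exact_mod_cast Finset.card_le_card (Finset.filter_subset_filter _ h)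
  have hcR_mod : ∀ Z Z', cR (Z ∪ Z') + cR (Z ∩ Z') = cR Z + cR Z' := by
    intro Z Z'
    simp only [hcR, Finset.filter_union, Finset.filter_inter_distrib]
    exact_mod_cast Finset.card_union_add_card_inter _ _
  have hcR_nonneg : ∀ Z, 0 ≤ cR Z := fun Z => Int.natCast_nonneg _
  have hpre_map : ∀ X ⊆ E, pre (X.map emb) = X := by
    intro X hX; ext a
    simp only [hpre, Finset.mem_filter]
    exact ⟨fun h => (Finset.mem_map' emb).1 h.2, fun h => ⟨hX h, (Finset.mem_map' emb).2 h⟩⟩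
  have hpre_F : pre F = ∅ := by
    ext a
    simp only [hpre, Finset.mem_filter, hF, Finset.mem_map, Finset.notMem_empty]
    simp
  have hcR_map : ∀ X : Finset α, cR (X.map emb) = 0 := by
    intro X
    simp only [hcR]
    norm_cast
    rw [Finset.card_eq_zero, Finset.filter_eq_empty_iff]
    intro s hs
    obtain ⟨a, _, rfl⟩ := Finset.mem_map.1 hs
    simp [hemb]
  have hcR_F : cR F = d0 := by
    simp only [hcR, hF]
    rw [Finset.filter_eq_self.2]
    · rw [Finset.card_map, Finset.card_range]; exact hdNe
    · intro s hs
      obtain ⟨n, _, rfl⟩ := Finset.mem_map.1 hs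
      simp
  have hdisj : Disjoint (E.map emb) F := by
    rw [Finset.disjoint_left]
    intro s hs hsF
    obtain ⟨a, _, rfl⟩ := Finset.mem_map.1 hs
    obtain ⟨n, _, hn⟩ := Finset.mem_map.1 hsF
    simp at hn
  have hpre_XF : ∀ X ⊆ E, pre (X.map emb ∪ F) = X := by
    intro X hX
    rw [hpre_union, hpre_map X hX, hpre_F, Finset.union_empty]
  have hcR_XF : ∀ X : Finset α, cR (X.map emb ∪ F) = d0 := by
    intro X
    simp only [hcR, Finset.filter_union]
    have h1 : (Finset.filter (fun s => s.isRight = true) (X.map emb)) = ∅ := by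
      have := hcR_map X
      simp only [hcR] at this
      exact_mod_cast Finset.card_eq_zero.1 (by exact_mod_cast this)
    rw [h1, Finset.empty_union]
    have := hcR_F
    simpa [hcR] using this
  -- rN is a matroid rank function on E.map emb ∪ F
  have hL1 := hL.1
  have hQ1 := hQ.1
  have hrN_mat : IsMatroidRankOn (E.map emb ∪ F) rN := by
    constructor
    · refine ⟨?_, ?_, ?_⟩
      · have : pre ∅ = ∅ := by
          ext a; simp [hpre]
        simp only [hrN, this, hcR]
        simp [hL1.1, hQ1.1]
        omega
      · intro A B hAB hBE
        simp only [hrN]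
        have h1 : L (pre A) ≤ L (pre B) := hL1.2.1 _ _ (hpre_mono hAB) (hpre_sub _)
        have h2 : Q (pre A) ≤ Q (pre B) := hQ1.2.1 _ _ (hpre_mono hAB) (hpre_sub _)
        have h3 := hcR_mono hAB
        omega
      · intro A B _ _
        simp only [hrN]
        have hsubL : L (pre A ∪ pre B) + L (pre A ∩ pre B) ≤ L (pre A) + L (pre B) :=
          hL1.2.2 _ _ (hpre_sub _) (hpre_sub _)
        have hsubQ : Q (pre A ∪ pre B) + Q (pre A ∩ pre B) ≤ Q (pre A) + Q (pre B) :=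
          hQ1.2.2 _ _ (hpre_sub _) (hpre_sub _)
        have hgA : L (pre (A ∩ B)) - Q (pre (A ∩ B)) + cR (A ∩ B)
            ≤ L (pre A) - Q (pre A) + cR A := by
          have h1 := hdiff (pre (A ∩ B)) (pre A) (by rw [hpre_inter]; exact Finset.inter_subset_left) (hpre_sub _)
          have h2 := hcR_mono (Z := A ∩ B) (Z' := A) Finset.inter_subset_left
          omega
        have hgB : L (pre (A ∩ B)) - Q (pre (A ∩ B)) + cR (A ∩ B)
            ≤ L (pre B) - Q (pre B) + cR B := by
          have h1 := hdiff (pre (A ∩ B)) (pre B) (by rw [hpre_inter]; exact Finset.inter_subset_right) (hpre_sub _)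
          have h2 := hcR_mono (Z := A ∩ B) (Z' := B) Finset.inter_subset_right
          omega
        have hmod := hcR_mod A B
        rw [hpre_union, hpre_inter] at *
        omega
    · intro e he
      rcases Finset.mem_union.1 he with h | h
      · obtain ⟨a, haE, rfl⟩ := Finset.mem_map.1 h
        have hpre1 : pre {emb a} = {a} := by
          ext b
          simp only [hpre, Finset.mem_filter, Finset.mem_singleton, hemb,
            Function.Embedding.coeFn_mk]
          constructor
          · rintro ⟨_, h2⟩; exact Sum.inl_injective h2
          · rintro rfl; exact ⟨haE, rfl⟩
        have hcr1 : cR {emb a} = 0 := by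
          have := hcR_map {a}
          rwa [Finset.map_singleton] at this
        simp only [hrN, hpre1, hcr1]
        have := hL.2 a haE
        omega
      · obtain ⟨n, _, rfl⟩ := Finset.mem_map.1 h
        have hpre1 : pre {Sum.inr n} = ∅ := by
          ext b; simp [hpre]
        have hcr1 : cR {(Sum.inr n : α ⊕ ℕ)} = 1 := by
          simp only [hcR, Finset.filter_singleton]
          norm_num
        simp only [hrN, Function.Embedding.coeFn_mk]
        rw [hpre1, hcr1, hL1.1, hQ1.1]
        omega
  unfold IsQuotientOn
  rw [show (⟨Sum.inl, Sum.inl_injective⟩ : α ↪ α ⊕ ℕ) = emb from rfl]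
  refine ⟨F, rN, hdisj, hrN_mat, ?_, ?_⟩
  · intro X hX
    simp only [hrN, hpre_map X hX, hcR_map X]
    have := hdiff X E hX le_rfl
    omega
  · intro X hX
    have h1 : rN (X.map emb ∪ F) = Q X + d0 := by
      simp only [hrN, hpre_XF X hX, hcR_XF X]
      have := hQle X hX
      omega
    have h2 : rN F = d0 := by
      have hpf : pre F = ∅ := hpre_F
      have hcf : cR F = d0 := hcR_F
      have hFe : F = (∅ : Finset α).map emb ∪ F := by simp
      simp only [hrN, hpf, hcf, hL1.1, hQ1.1]
      omega
    omega



theorem cnt_one {u : ℕ → ℤ} {k t : ℕ} (hanti : ∀ n, u (n + 1) ≤ u n)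
    (h01 : ∀ n < k, u n = 0 ∨ u n = 1) (htk : t < k) (hu : u t = 1) :
    (t : ℤ) < ∑ n ∈ Finset.range k, u n := by
  have hA : Antitone u := antitone_nat_of_succ_le hanti
  have hsplit := Finset.sum_Ico_consecutive u (Nat.zero_le (t + 1)) htk
  have h1 : ∑ n ∈ Finset.Ico 0 (t + 1), u n = (t : ℤ) + 1 := by
    have hc : ∀ n ∈ Finset.Ico 0 (t + 1), u n = 1 := by
      intro n hn
      have hn' := Finset.mem_Ico.1 hn
      have : u n ≥ 1 := hu ▸ hA (Nat.lt_succ_iff.1 hn'.2)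
      rcases h01 n (lt_of_lt_of_le hn'.2 htk) with h | h <;> omega
    rw [Finset.sum_congr rfl hc]
    simp
  have h2 : 0 ≤ ∑ n ∈ Finset.Ico (t + 1) k, u n := by
    apply Finset.sum_nonneg
    intro n hn
    rcases h01 n (Finset.mem_Ico.1 hn).2 with h | h <;> omega
  rw [Finset.range_eq_Ico, ← hsplit, h1]
  omega

theorem cnt_zero {u : ℕ → ℤ} {k t : ℕ} (hanti : ∀ n, u (n + 1) ≤ u n)
    (h01 : ∀ n < k, u n = 0 ∨ u n = 1) (htk : t < k) (hu : u t = 0) :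
    ∑ n ∈ Finset.range k, u n ≤ (t : ℤ) := by
  have hA : Antitone u := antitone_nat_of_succ_le hanti
  have hsplit := Finset.sum_Ico_consecutive u (Nat.zero_le t) (le_of_lt htk)
  have h1 : ∑ n ∈ Finset.Ico 0 t, u n ≤ (t : ℤ) := by
    calc ∑ n ∈ Finset.Ico 0 t, u n ≤ ∑ _n ∈ Finset.Ico 0 t, (1 : ℤ) := by
          apply Finset.sum_le_sum
          intro n hn
          rcases h01 n (lt_of_lt_of_le (Finset.mem_Ico.1 hn).2 (le_of_lt htk)) with h | h <;> omega
      _ = (t : ℤ) := by simp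
  have h2 : ∑ n ∈ Finset.Ico t k, u n ≤ 0 := by
    apply Finset.sum_nonpos
    intro n hn
    have := hA (Finset.mem_Ico.1 hn).1
    omega
  rw [Finset.range_eq_Ico, ← hsplit]
  omega

/-- quotients have smaller rank differences -/
theorem quotient_diff {E : Finset α} {L Q : Finset α → ℤ} (hq : IsQuotientOn E Q L)
    {X X' : Finset α} (hXX : X ⊆ X') (hX'E : X' ⊆ E) :
    Q X' - Q X ≤ L X' - L X := by
  obtain ⟨F, rN, hdisj, hN, hdel, hcon⟩ := hq
  set emb : α ↪ α ⊕ ℕ := ⟨Sum.inl, Sum.inl_injective⟩ with hemb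
  have hXE : X ⊆ E := hXX.trans hX'E
  have hmm : X.map emb ⊆ X'.map emb := Finset.map_subset_map.2 hXX
  have hX'm : X'.map emb ⊆ E.map emb := Finset.map_subset_map.2 hX'E
  have hXm : X.map emb ⊆ E.map emb := Finset.map_subset_map.2 hXE
  have hU : X'.map emb ∪ (X.map emb ∪ F) = X'.map emb ∪ F := by
    rw [← Finset.union_assoc, Finset.union_eq_left.2 hmm]
  have hdisjX' : X'.map emb ∩ F = ∅ := by
    rw [← Finset.disjoint_iff_inter_eq_empty]
    exact hdisj.mono_left hX'm
  have hI : X'.map emb ∩ (X.map emb ∪ F) = X.map emb := by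
    rw [Finset.inter_union_distrib_left, Finset.inter_eq_right.2 hmm, hdisjX',
      Finset.union_empty]
  have hsub := hN.1.2.2 (X'.map emb) (X.map emb ∪ F)
    (hX'm.trans Finset.subset_union_left)
    (Finset.union_subset (hXm.trans Finset.subset_union_left) Finset.subset_union_right)
  rw [hU, hI] at hsub
  have e1 := hdel X hXE
  have e2 := hdel X' hX'E
  have e3 := hcon X hXE
  have e4 := hcon X' hX'E
  omega


theorem dm_le_top {E : Finset α} {ρ : Finset α → ℤ} (hρ : IsPolymatroidOn E ρ)
    {B : Finset α} {x : α} (hB : B ⊆ E) (hx : x ∈ E) (hxB : x ∉ B) :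
    dm ρ B x ≤ ρ {x} := by
  have h := dm_submod hρ (Finset.empty_subset B) hB hx hxB
  have : dm ρ ∅ x = ρ {x} := by simp [dm, hρ.1]
  omega

theorem dm_zero_one {E : Finset α} {r : Finset α → ℤ} (hr : IsMatroidRankOn E r)
    {B : Finset α} {x : α} (hB : B ⊆ E) (hx : x ∈ E) (hxB : x ∉ B) :
    dm r B x = 0 ∨ dm r B x = 1 := by
  have h0 := dm_nonneg hr.1 hB hx
  have h1 := dm_le_top hr.1 hB hx hxB
  have h2 := hr.2 x hx
  omega

end Stmt17Aux

open Stmt17Aux in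
theorem stmt17 [DecidableEq α] (E : Finset α) (ρ : Finset α → ℤ)
    (hρ : IsPolymatroidOn E ρ) :
    (∃ k : ℕ, 2 ≤ k ∧ MemQk k E ρ) ↔
    ¬ ∃ (A B : Finset α) (x y : α) (a b c : ℤ),
      A ⊆ E ∧ B ⊆ E ∧ Disjoint A B ∧ E \ (A ∪ B) = {x, y} ∧ x ≠ y ∧
      0 ≤ a ∧ a < b ∧ b < c ∧
      ρ ({x} ∪ B) - ρ B = b ∧ ρ ({y} ∪ B) - ρ B = c ∧
      ρ ({x, y} ∪ B) - ρ B = a + c := by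
  constructor
  · rintro ⟨k, hk2, M, hMmat, hsum, hq⟩
      ⟨A, B, x, y, a, b, c, hA, hB, hdAB, hExy, hxy, ha0, hab, hbc, hbv, hcv, hacv⟩
    -- membership facts
    have hx' : x ∈ E \ (A ∪ B) := by rw [hExy]; simp
    have hy' : y ∈ E \ (A ∪ B) := by rw [hExy]; simp
    have hxE : x ∈ E := (Finset.mem_sdiff.1 hx').1
    have hyE : y ∈ E := (Finset.mem_sdiff.1 hy').1
    have hxB : x ∉ B := fun h => (Finset.mem_sdiff.1 hx').2 (Finset.mem_union_right _ h)
    have hyB : y ∉ B := fun h => (Finset.mem_sdiff.1 hy').2 (Finset.mem_union_right _ h)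
    have hxyB : x ∉ insert y B := by simp [hxy, hxB]
    have hyxB : y ∉ insert x B := by simp [hxy.symm, hyB]
    have hxBE : insert x B ⊆ E := Finset.insert_subset hxE hB
    have hyBE : insert y B ⊆ E := Finset.insert_subset hyE hB
    have hxyBE : insert x (insert y B) ⊆ E := Finset.insert_subset hxE hyBE
    have hyxBE : insert y (insert x B) ⊆ E := Finset.insert_subset hyE hxBE
    -- values in dm form
    have hsing : ∀ (z : α) (C : Finset α), ({z} : Finset α) ∪ C = insert z C := by
      intro z C; ext u; simp
    have hb : dm ρ B x = b := by rw [← hbv, hsing]; rfl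
    have hc : dm ρ B y = c := by rw [← hcv, hsing]; rfl
    have hxyB_eq : ({x, y} : Finset α) ∪ B = insert x (insert y B) := by
      rw [Finset.insert_union, hsing]
    have ha : dm ρ (insert y B) x = a := by
      have h1 : ρ (insert x (insert y B)) - ρ B = a + c := by rw [← hxyB_eq]; exact hacv
      have h2 : ρ (insert y B) - ρ B = c := hc
      simp only [dm]; omega
    -- marginal sequences
    classical
    set uDx : ℕ → ℤ := fun n => if h : n < k then dm (M ⟨n, h⟩) B x else 0 with huDx
    set uAx : ℕ → ℤ := fun n => if h : n < k then dm (M ⟨n, h⟩) (insert y B) x else 0 with huAx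
    set uCy : ℕ → ℤ := fun n => if h : n < k then dm (M ⟨n, h⟩) (insert x B) y else 0 with huCy
    have hfin : ∀ (f : Fin k → ℤ) (u : ℕ → ℤ),
        (∀ j : Fin k, u j = f j) → ∑ j : Fin k, f j = ∑ n ∈ Finset.range k, u n := by
      intro f u hu
      rw [← Fin.sum_univ_eq_sum_range u k]
      exact Finset.sum_congr rfl fun j _ => (hu j).symm
    have hsum_dm : ∀ (X : Finset α) (z : α), X ⊆ E → insert z X ⊆ E →
        ∑ j : Fin k, dm (M j) X z = dm ρ X z := by
      intro X z hXE hzXE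
      have h1 := hsum X hXE
      have h2 := hsum (insert z X) hzXE
      simp only [dm, h1, h2, ← Finset.sum_sub_distrib]
    -- sums
    have hSDx : ∑ n ∈ Finset.range k, uDx n = b := by
      rw [← hfin (fun j => dm (M j) B x) uDx (fun j => by simp [huDx, j.isLt])]
      rw [hsum_dm B x hB hxBE, hb]
    have hSAx : ∑ n ∈ Finset.range k, uAx n = a := by
      rw [← hfin (fun j => dm (M j) (insert y B) x) uAx (fun j => by simp [huAx, j.isLt])]
      rw [hsum_dm (insert y B) x hyBE hxyBE, ha]
    have hSCy : ∑ n ∈ Finset.range k, uCy n = a + c - b := by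
      rw [← hfin (fun j => dm (M j) (insert x B) y) uCy (fun j => by simp [huCy, j.isLt])]
      rw [hsum_dm (insert x B) y hxBE hyxBE]
      have hid := dm_identity ρ (B := B) x y
      rw [hb, hc, ha] at hid
      omega
    -- 0/1 values
    have h01Dx : ∀ n < k, uDx n = 0 ∨ uDx n = 1 := by
      intro n hn; simp only [huDx, dif_pos hn]
      exact dm_zero_one (hMmat _) hB hxE hxB
    have h01Ax : ∀ n < k, uAx n = 0 ∨ uAx n = 1 := by
      intro n hn; simp only [huAx, dif_pos hn]
      exact dm_zero_one (hMmat _) hyBE hxE hxyB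
    have h01Cy : ∀ n < k, uCy n = 0 ∨ uCy n = 1 := by
      intro n hn; simp only [huCy, dif_pos hn]
      exact dm_zero_one (hMmat _) hxBE hyE hyxB
    -- antitone
    have hanti : ∀ (X : Finset α) (z : α), X ⊆ E → z ∈ E → z ∉ X →
        ∀ n, (if h : n + 1 < k then dm (M ⟨n + 1, h⟩) X z else 0)
          ≤ (if h : n < k then dm (M ⟨n, h⟩) X z else 0) := by
      intro X z hXE hzE hzX n
      by_cases h1 : n + 1 < k
      · have h0 : n < k := Nat.lt_of_succ_lt h1
        rw [dif_pos h1, dif_pos h0]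
        have hqd := quotient_diff (hq ⟨n, h0⟩ h1) (Finset.subset_insert z X)
          (Finset.insert_subset hzE hXE)
        simp only [Fin.val_mk] at hqd
        simp only [dm]; omega
      · rw [dif_neg h1]
        by_cases h0 : n < k
        · rw [dif_pos h0]; exact dm_nonneg (hMmat _).1 hXE hzE
        · rw [dif_neg h0]
    have hantiDx : ∀ n, uDx (n + 1) ≤ uDx n := hanti B x hB hxE hxB
    have hantiAx : ∀ n, uAx (n + 1) ≤ uAx n := hanti (insert y B) x hyBE hxE hxyB
    have hantiCy : ∀ n, uCy (n + 1) ≤ uCy n := hanti (insert x B) y hxBE hyE hyxB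
    -- the index t = a
    have hSDx_le : ∑ n ∈ Finset.range k, uDx n ≤ (k : ℤ) := by
      calc ∑ n ∈ Finset.range k, uDx n ≤ ∑ _n ∈ Finset.range k, (1 : ℤ) :=
            Finset.sum_le_sum fun n hn => by
              rcases h01Dx n (Finset.mem_range.1 hn) with h | h <;> omega
        _ = (k : ℤ) := by simp
    set t : ℕ := a.toNat with ht
    have hta : (t : ℤ) = a := Int.toNat_of_nonneg ha0
    have htk : t < k := by omega
    have hAxT : uAx t = 0 := by
      rcases h01Ax t htk with h | h
      · exact h
      · have := cnt_one hantiAx h01Ax htk h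
        omega
    have hDxT : uDx t = 1 := by
      rcases h01Dx t htk with h | h
      · have := cnt_zero hantiDx h01Dx htk h
        omega
      · exact h
    have hCyT : uCy t = 0 := by
      have hid := dm_identity (M ⟨t, htk⟩) (B := B) x y
      have h1 : uDx t = dm (M ⟨t, htk⟩) B x := by simp [huDx, htk]
      have h2 : uAx t = dm (M ⟨t, htk⟩) (insert y B) x := by simp [huAx, htk]
      have h3 : uCy t = dm (M ⟨t, htk⟩) (insert x B) y := by simp [huCy, htk]
      rcases h01Cy t htk with h | h
      · exact h
      · rcases dm_zero_one (hMmat ⟨t, htk⟩) hB hyE hyB with h4 | h4 <;> omega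
    have := cnt_zero hantiCy h01Cy htk hCyT
    omega
  · intro hne
    classical
    -- derive the Star property
    have hstar : Star E ρ := by
      intro B hB x hx y hy hxB hyB hxy hlt
      have hyBE : insert y B ⊆ E := Finset.insert_subset hy hB
      have hxyB : x ∉ insert y B := by simp [hxy, hxB]
      have hle : dm ρ (insert y B) x ≤ dm ρ B x :=
        dm_submod hρ (Finset.subset_insert y B) hyBE hx hxyB
      by_contra hne2
      have hlt2 : dm ρ (insert y B) x < dm ρ B x := lt_of_le_of_ne hle hne2
      apply hne
      refine ⟨E \ (B ∪ {x, y}), B, x, y, dm ρ (insert y B) x, dm ρ B x, dm ρ B y,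
        Finset.sdiff_subset, hB, ?_, ?_, hxy, ?_, hlt2, hlt, ?_, ?_, ?_⟩
      · rw [Finset.disjoint_left]
        intro u hu huB
        exact (Finset.mem_sdiff.1 hu).2 (Finset.mem_union_left _ huB)
      · ext u
        simp only [Finset.mem_sdiff, Finset.mem_union, Finset.mem_insert,
          Finset.mem_singleton]
        constructor
        · rintro ⟨huE, hu2⟩
          by_contra h
          push_neg at h
          exact hu2 (Or.inl ⟨huE, by tauto⟩)
        · rintro (rfl | rfl)
          · refine ⟨hx, ?_⟩
            simp [hxB]
          · refine ⟨hy, ?_⟩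
            simp [hyB]
      · exact dm_nonneg hρ hyBE hx
      · rw [show ({x} : Finset α) ∪ B = insert x B from by ext u; simp]; rfl
      · rw [show ({y} : Finset α) ∪ B = insert y B from by ext u; simp]; rfl
      · rw [show ({x, y} : Finset α) ∪ B = insert x (insert y B) from by ext u; simp]
        simp only [dm]
        omega
    -- setup
    set k : ℕ := (E.sup fun e => (ρ {e}).toNat) + 2 with hk
    have hk2 : 2 ≤ k := by omega
    have hsing : ∀ e ∈ E, ({e} : Finset α) ⊆ E := fun e he => Finset.singleton_subset_iff.2 he
    have hρe : ∀ e ∈ E, ρ {e} ≤ (k : ℤ) := by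
      intro e he
      have h0 : 0 ≤ ρ {e} := by
        have h := hρ.2.1 ∅ {e} (Finset.empty_subset _) (hsing e he)
        have h2 := hρ.1
        omega
      have h1 : (ρ {e}).toNat ≤ E.sup (fun e => (ρ {e}).toNat) :=
        Finset.le_sup (f := fun e => (ρ {e}).toNat) he
      omega
    have hdm_le_k : ∀ X ⊆ E, ∀ x ∈ E, x ∉ X → dm ρ X x ≤ (k : ℤ) := by
      intro X hX x hx hxX
      exact le_trans (dm_le_top hρ hX hx hxX) (hρe x hx)
    -- g and its marginals
    set g : ℕ → Finset α → ℤ := fun n X => Sf ρ (n : ℤ) X with hg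
    have hgm : ∀ (n : ℕ) {X : Finset α} {x : α}, X ⊆ E → x ∈ E → x ∉ X →
        g n (insert x X) = g n X + min (n : ℤ) (dm ρ X x) := by
      intro n X x hX hx hxX
      exact Sf_insert hρ hstar (n : ℤ) hX hx hxX
    have hg_empty : ∀ n, g n ∅ = 0 := fun n => Sf_empty ρ _
    have hg0 : ∀ X ⊆ E, g 0 X = 0 := by
      intro X
      induction X using Finset.induction_on with
      | empty => intro _; exact hg_empty 0
      | @insert x X hxX ih =>
          intro hsub
          have hX : X ⊆ E := (Finset.subset_insert x X).trans hsub
          have hx : x ∈ E := hsub (Finset.mem_insert_self x X)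
          rw [hgm 0 hX hx hxX, ih hX]
          have := dm_nonneg hρ hX hx
          omega
    have hgk : ∀ X ⊆ E, g k X = ρ X := by
      intro X
      induction X using Finset.induction_on with
      | empty => intro _; rw [hg_empty k, hρ.1]
      | @insert x X hxX ih =>
          intro hsub
          have hX : X ⊆ E := (Finset.subset_insert x X).trans hsub
          have hx : x ∈ E := hsub (Finset.mem_insert_self x X)
          rw [hgm k hX hx hxX, ih hX]
          have h1 := hdm_le_k X hX x hx hxX
          have h2 := dm_nonneg hρ hX hx
          simp only [dm] at *
          omega
    -- the matroids
    set M : Fin k → Finset α → ℤ := fun j X => g ((j : ℕ) + 1) X - g (j : ℕ) X with hM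
    have hMarg : ∀ (n : ℕ) {X : Finset α} {x : α}, X ⊆ E → x ∈ E → x ∉ X →
        (g (n + 1) (insert x X) - g n (insert x X)) - (g (n + 1) X - g n X)
          = min ((n : ℤ) + 1) (dm ρ X x) - min (n : ℤ) (dm ρ X x) := by
      intro n X x hX hx hxX
      rw [hgm (n + 1) hX hx hxX, hgm n hX hx hxX]
      push_cast
      ring
    have hMpoly : ∀ n : ℕ, IsPolymatroidOn E (fun X => g (n + 1) X - g n X) := by
      intro n
      refine ⟨by dsimp only; rw [hg_empty, hg_empty]; ring, ?_, ?_⟩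
      · apply mono_of_marg (E := E)
        intro X hX x hx hxX
        have h1 := hMarg n hX hx hxX
        have h2 := dm_nonneg hρ hX hx
        omega
      · apply submod_of_marg (E := E)
        intro X X' hXX hX'E x hx hxX'
        have hXE : X ⊆ E := hXX.trans hX'E
        have hxX : x ∉ X := fun h => hxX' (hXX h)
        have h1 := hMarg n hXE hx hxX
        have h2 := hMarg n hX'E hx hxX'
        have h3 := dm_submod hρ hXX hX'E hx hxX'
        omega
    have hMmat : ∀ n : ℕ, IsMatroidRankOn E (fun X => g (n + 1) X - g n X) := by
      intro n
      refine ⟨hMpoly n, ?_⟩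
      intro e he
      have h1 := hMarg n (Finset.empty_subset E) he (Finset.notMem_empty e)
      have h2 : insert e ∅ = ({e} : Finset α) := by ext u; simp
      rw [h2, hg_empty, hg_empty] at h1
      dsimp only
      omega
    have hqdiff : ∀ n : ℕ, ∀ X X' : Finset α, X ⊆ X' → X' ⊆ E →
        (g (n + 1 + 1) X' - g (n + 1) X') - (g (n + 1 + 1) X - g (n + 1) X)
          ≤ (g (n + 1) X' - g n X') - (g (n + 1) X - g n X) := by
      intro n X X' hXX hX'E
      have hmono := mono_of_marg (E := E)
        (f := fun X => (g (n + 1) X - g n X) - (g (n + 1 + 1) X - g (n + 1) X)) ?_ X X' hXX hX'E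
      · omega
      · intro X hX x hx hxX
        have h1 := hMarg n hX hx hxX
        have h2 := hMarg (n + 1) hX hx hxX
        push_cast at h1 h2 ⊢
        omega
    refine ⟨k, hk2, M, ?_, ?_, ?_⟩
    · intro s
      exact hMmat (s : ℕ)
    · intro X hX
      have h1 : ∑ s : Fin k, M s X = ∑ n ∈ Finset.range k, (g (n + 1) X - g n X) := by
        rw [← Fin.sum_univ_eq_sum_range (fun n => g (n + 1) X - g n X) k]
      rw [h1, Finset.sum_range_sub (fun n => g n X) k, hgk X hX, hg0 X hX]
      ring
    · intro s h
      apply isQuotientOn_of_diff (hMmat (s : ℕ)) (hMmat ((s : ℕ) + 1))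
      intro X X' hXX hX'E
      exact hqdiff (s : ℕ) X X' hXX hX'E
end

section
/- Let t be a positive integer, let M_1 and M_2 be matroids on a finite set E with M_2 a quotient of M_1, and let ρ be the 2-polymatroid on E with ρ(X) = r_{M_1}(X) + r_{M_2}(X) for all X ⊆ E. Then r_{M_1}(E) − r_{M_2}(E) ≤ t if and only if ρ has no minor isomorphic to the free matroid U_{t+1,t+1}, i.e., no minor ρ′ of ρ on a ground set F with |F| = t+1 satisfying ρ′(X) = |X| for all X ⊆ F. -/
variable {α : Type*}

section helpers
variable {β : Type*} [DecidableEq β] {E : Finset β} {r : Finset β → ℤ}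

lemma poly_nonneg (h : IsPolymatroidOn E r) {X : Finset β} (hX : X ⊆ E) : 0 ≤ r X := by
  have := h.2.1 ∅ X (Finset.empty_subset X) hX
  rw [h.1] at this; exact this

lemma mat_insert_le (h : IsMatroidRankOn E r) {X : Finset β} {e : β} (hX : X ⊆ E) (he : e ∈ E) :
    r (insert e X) ≤ r X + 1 := by
  have hsub := h.1.2.2 X {e} hX (by simpa using he)
  have h1 := h.2 e he
  have h0 : 0 ≤ r (X ∩ {e}) := poly_nonneg h.1 (Finset.inter_subset_left.trans hX)
  have hu : X ∪ {e} = insert e X := by ext x; simp [or_comm]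
  rw [hu] at hsub
  linarith

lemma mat_closure (h : IsPolymatroidOn E r) {B : Finset β} (hB : B ⊆ E) :
    ∀ F : Finset β, F ⊆ E → (∀ e ∈ F, r (insert e B) = r B) → r (B ∪ F) = r B := by
  intro F
  induction F using Finset.induction_on with
  | empty => intro _ _; simp
  | @insert a s ha ih =>
    intro hFE hcl
    have hsE : s ⊆ E := (Finset.subset_insert a s).trans hFE
    have haE : a ∈ E := hFE (Finset.mem_insert_self a s)
    have hBs : r (B ∪ s) = r B := ih hsE (fun e he => hcl e (Finset.mem_insert_of_mem he))
    have hsub := h.2.2 (B ∪ s) (insert a B) (Finset.union_subset hB hsE)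
      (Finset.insert_subset haE hB)
    have hun : (B ∪ s) ∪ insert a B = B ∪ insert a s := by ext x; simp; tauto
    have hintB : B ⊆ (B ∪ s) ∩ insert a B :=
      Finset.subset_inter Finset.subset_union_left (Finset.subset_insert a B)
    have hmono : r B ≤ r ((B ∪ s) ∩ insert a B) :=
      h.2.1 _ _ hintB (Finset.inter_subset_left.trans (Finset.union_subset hB hsE))
    have hge : r B ≤ r (B ∪ insert a s) :=
      h.2.1 B _ Finset.subset_union_left (Finset.union_subset hB hFE)
    rw [hun] at hsub
    have := hcl a (Finset.mem_insert_self a s)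
    linarith

lemma mat_step (h : IsMatroidRankOn E r) {X : Finset β} (hX : X ⊆ E) (hlt : r X < r E) :
    ∃ e ∈ E, e ∉ X ∧ r (insert e X) = r X + 1 := by
  by_contra hcon
  push_neg at hcon
  have hcl : ∀ e ∈ E, r (insert e X) = r X := by
    intro e he
    by_cases hx : e ∈ X
    · rw [Finset.insert_eq_self.2 hx]
    · have hle := mat_insert_le h hX he
      have hge : r X ≤ r (insert e X) :=
        h.1.2.1 X _ (Finset.subset_insert e X) (Finset.insert_subset he hX)
      have hne := hcon e he hx
      omega
  have := mat_closure h.1 hX E Finset.Subset.rfl hcl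
  rw [Finset.union_eq_right.2 hX] at this
  omega

lemma mat_chain (h : IsMatroidRankOn E r) {B : Finset β} (hB : B ⊆ E) (m : ℕ)
    (hm : r B + m ≤ r E) : ∃ S, B ⊆ S ∧ S ⊆ E ∧ (S \ B).card = m ∧ r S = r B + m := by
  induction m with
  | zero => exact ⟨B, Finset.Subset.rfl, hB, by simp, by simp⟩
  | succ n ih =>
    obtain ⟨S, hBS, hSE, hcard, hrS⟩ := ih (by push_cast at hm ⊢; linarith)
    have hlt : r S < r E := by push_cast at hm; omega
    obtain ⟨e, heE, heS, hre⟩ := mat_step h hSE hlt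
    refine ⟨insert e S, hBS.trans (Finset.subset_insert e S),
      Finset.insert_subset heE hSE, ?_, by push_cast; omega⟩
    have heB : e ∉ B := fun hx => heS (hBS hx)
    rw [Finset.insert_sdiff_of_notMem _ heB]  -- maybe wrong name
    rw [Finset.card_insert_of_notMem (by simp [heS])]
    omega

lemma mat_union_card (h : IsMatroidRankOn E r) {S : Finset β} (hS : S ⊆ E) :
    ∀ T : Finset β, T ⊆ E → r (S ∪ T) ≤ r S + T.card := by
  intro T
  induction T using Finset.induction_on with
  | empty => simp
  | @insert a s ha ih =>
    intro hT
    have hsE : s ⊆ E := (Finset.subset_insert a s).trans hT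
    have haE : a ∈ E := hT (Finset.mem_insert_self a s)
    have h1 : S ∪ insert a s = insert a (S ∪ s) := Finset.union_insert a S s
    have h2 := mat_insert_le h (Finset.union_subset hS hsE) haE
    have h3 := ih hsE
    rw [h1, Finset.card_insert_of_notMem ha]
    push_cast
    linarith

lemma mat_exact (h : IsMatroidRankOn E r) {B F : Finset β} (hB : B ⊆ E) (hF : F ⊆ E)
    (hdisj : Disjoint F B) (hfull : r (F ∪ B) = r B + F.card)
    {X : Finset β} (hX : X ⊆ F) : r (X ∪ B) = r B + X.card := by
  have hXE : X ⊆ E := hX.trans hF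
  have hup : r (X ∪ B) ≤ r B + X.card := by
    have := mat_union_card h hB X hXE
    rw [Finset.union_comm] at this; linarith
  have hlo : r B + (F.card : ℤ) ≤ r (X ∪ B) + (F \ X).card := by
    have := mat_union_card h (Finset.union_subset hXE hB) (F \ X) ((Finset.sdiff_subset).trans hF)
    have hun : (X ∪ B) ∪ (F \ X) = F ∪ B := by
      ext x
      simp only [Finset.mem_union, Finset.mem_sdiff]
      have hx' : x ∈ X → x ∈ F := fun h => hX h
      by_cases hxX : x ∈ X <;> tauto
    rw [hun, hfull] at this
    linarith
  have hcardF : (F \ X).card = F.card - X.card := Finset.card_sdiff_of_subset hX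
  have hXle : X.card ≤ F.card := Finset.card_le_card hX
  omega

end helpers

lemma quotient_diff [DecidableEq α] {E : Finset α} {r1 r2 : Finset α → ℤ}
    (hq : IsQuotientOn E r2 r1) {X Y : Finset α} (hXY : X ⊆ Y) (hY : Y ⊆ E) :
    r2 Y - r2 X ≤ r1 Y - r1 X := by
  obtain ⟨F, rN, hdisj, hN, hL, hQ⟩ := hq
  set f : α ↪ (α ⊕ ℕ) := ⟨Sum.inl, Sum.inl_injective⟩ with hf
  have hXE : X ⊆ E := hXY.trans hY
  rw [hL X hXE, hL Y hY, hQ X hXE, hQ Y hY]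
  have hYm : Y.map f ⊆ E.map f := Finset.map_subset_map.2 hY
  have hXmYm : X.map f ⊆ Y.map f := Finset.map_subset_map.2 hXY
  have hground : E.map f ⊆ E.map f ∪ F := Finset.subset_union_left
  have hsub := hN.1.2.2 (Y.map f) (X.map f ∪ F) (hYm.trans hground)
    (Finset.union_subset ((hXmYm.trans hYm).trans hground) Finset.subset_union_right)
  have hun : Y.map f ∪ (X.map f ∪ F) = Y.map f ∪ F := by
    rw [← Finset.union_assoc, Finset.union_eq_left.2 hXmYm]
  have hYF : Y.map f ∩ F = ∅ := Finset.disjoint_iff_inter_eq_empty.1 (hdisj.mono_left hYm)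
  have hint : Y.map f ∩ (X.map f ∪ F) = X.map f := by
    rw [Finset.inter_union_distrib_left, Finset.inter_eq_right.2 hXmYm, hYF, Finset.union_empty]
  rw [hun, hint] at hsub
  linarith


theorem stmt18 [DecidableEq α] (t : ℕ) (ht : 0 < t)
    (E : Finset α) (r1 r2 : Finset α → ℤ)
    (h1 : IsMatroidRankOn E r1) (h2 : IsMatroidRankOn E r2)
    (hq : IsQuotientOn E r2 r1) :
    (r1 E - r2 E ≤ (t : ℤ)) ↔
    ¬ ∃ A B : Finset α, A ⊆ E ∧ B ⊆ E ∧ Disjoint A B ∧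
      (E \ (A ∪ B)).card = t + 1 ∧
      ∀ X ⊆ E \ (A ∪ B),
        (r1 (X ∪ B) + r2 (X ∪ B)) - (r1 B + r2 B) = (X.card : ℤ) := by
  constructor
  · rintro hle ⟨A, B, hA, hB, hAB, hcard, hmin⟩
    set F : Finset α := E \ (A ∪ B) with hFdef
    have hF : F ⊆ E := Finset.sdiff_subset
    -- singletons: r2 does not grow
    have hcl : ∀ e ∈ F, r2 (insert e B) = r2 B := by
      intro e he
      have heE : e ∈ E := hF he
      have h1e := hmin {e} (by simpa using he)
      rw [← Finset.insert_eq, Finset.card_singleton] at h1e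
      have hiB : insert e B ⊆ E := Finset.insert_subset heE hB
      have hqd := quotient_diff hq (Finset.subset_insert e B) hiB
      have hm2 : r2 B ≤ r2 (insert e B) := h2.1.2.1 B _ (Finset.subset_insert e B) hiB
      push_cast at h1e
      omega
    have hclo : r2 (B ∪ F) = r2 B := mat_closure h2.1 hB F hF hcl
    have hFfull := hmin F Finset.Subset.rfl
    rw [hcard] at hFfull
    rw [Finset.union_comm] at hclo
    have hr1F : r1 (F ∪ B) = r1 B + (t + 1) := by push_cast at hFfull ⊢; linarith
    have hq1 := quotient_diff hq (Finset.union_subset hF hB) Finset.Subset.rfl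
    have hq2 := quotient_diff hq (Finset.empty_subset B) hB
    rw [h1.1.1, h2.1.1] at hq2
    push_cast at hle
    linarith
  · intro hno
    by_contra hgt
    push_neg at hgt
    apply hno
    -- basis of M2
    have hr2nn : 0 ≤ r2 E := poly_nonneg h2.1 Finset.Subset.rfl
    obtain ⟨B, -, hBE, hBcard, hBr⟩ := mat_chain h2 (Finset.empty_subset E) (r2 E).toNat
      (by rw [h2.1.1]; omega)
    rw [Finset.sdiff_empty] at hBcard
    rw [h2.1.1] at hBr
    have hBr2 : r2 B = r2 E := by omega
    have hBcard' : (B.card : ℤ) = r2 E := by omega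
    have hr1B : r1 B ≤ (B.card : ℤ) := by
      have := mat_union_card h1 (Finset.empty_subset E) B hBE
      rw [Finset.empty_union, h1.1.1] at this
      linarith
    obtain ⟨S, hBS, hSE, hScard, hSr⟩ := mat_chain h1 hBE (t + 1) (by push_cast; linarith)
    set F : Finset α := S \ B with hFdef
    have hFE : F ⊆ E := Finset.sdiff_subset.trans hSE
    have hFB : Disjoint F B := Finset.sdiff_disjoint
    have hFuB : F ∪ B = S := by
      rw [hFdef, Finset.sdiff_union_self_eq_union, Finset.union_eq_left.2 hBS]
    have hkey : E \ (E \ S ∪ B) = F := by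
      ext x
      simp only [hFdef, Finset.mem_sdiff, Finset.mem_union, not_or, not_and, not_not]
      have hxS : x ∈ S → x ∈ E := fun h => hSE h
      have hxB : x ∈ B → x ∈ S := fun h => hBS h
      tauto
    refine ⟨E \ S, B, Finset.sdiff_subset, hBE, Finset.sdiff_disjoint.mono_right hBS, ?_, ?_⟩
    · rw [hkey]; exact hScard
    rw [hkey]
    intro X hX
    have hXE : X ⊆ E := hX.trans hFE
    have hr1X : r1 (X ∪ B) = r1 B + X.card := by
      refine mat_exact h1 hBE hFE hFB ?_ hX
      rw [hFuB, hSr, hScard]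
    have hr2lo : r2 B ≤ r2 (X ∪ B) := h2.1.2.1 B _ Finset.subset_union_right
      (Finset.union_subset hXE hBE)
    have hr2hi : r2 (X ∪ B) ≤ r2 E := h2.1.2.1 _ E
      (Finset.union_subset hXE hBE) Finset.Subset.rfl
    have hr2X : r2 (X ∪ B) = r2 B := by omega
    rw [hr1X, hr2X]
    ring
end

section
/- Fix an integer k ≥ 2 and let ρ be a polymatroid on a finite set E belonging to Q_k. Then there is exactly one k-tuple (M_1, …, M_k) of matroids on E such that ρ(X) = r_{M_1}(X)+⋯+r_{M_k}(X) for all X ⊆ E and M_{i+1} is a quotient of M_i for each i ∈ {1,…,k−1}; moreover its rank functions satisfy: r_{M_i}(∅) = 0 and, for X ⊊ E and y ∈ E−X, r_{M_i}(X∪{y}) = r_{M_i}(X)+1 if ρ(X∪{y}) ≥ ρ(X)+i, and r_{M_i}(X∪{y}) = r_{M_i}(X) otherwise. -/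
variable {α : Type*}

open Finset

lemma rank_insert_bounds {β : Type*} [DecidableEq β] {E : Finset β} {r : Finset β → ℤ}
    (h : IsMatroidRankOn E r) {X : Finset β} {y : β} (hX : X ⊆ E) (hy : y ∈ E) (hyX : y ∉ X) :
    r X ≤ r (insert y X) ∧ r (insert y X) ≤ r X + 1 := by
  obtain ⟨⟨h0, hmono, hsub⟩, h1⟩ := h
  constructor
  · exact hmono X (insert y X) (subset_insert _ _) (insert_subset hy hX)
  · have hs := hsub X {y} hX (by simpa using hy)
    have hu : X ∪ {y} = insert y X := by rw [union_comm, insert_eq]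
    have hi : X ∩ {y} = ∅ := by
      ext a; simp only [mem_inter, mem_singleton, notMem_empty, iff_false]
      rintro ⟨ha, rfl⟩; exact hyX ha
    rw [hu, hi, h0] at hs
    have := h1 y hy
    linarith

lemma quotient_step [DecidableEq α] {E : Finset α} {rQ rL : Finset α → ℤ}
    (h : IsQuotientOn E rQ rL) {X : Finset α} {y : α} (hX : X ⊆ E) (hy : y ∈ E) :
    rQ (insert y X) - rQ X ≤ rL (insert y X) - rL X := by
  obtain ⟨F, rN, hdisj, hN, hL, hQf⟩ := h
  set ι : α ↪ (α ⊕ ℕ) := ⟨Sum.inl, Sum.inl_injective⟩ with hι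
  have hXE : insert y X ⊆ E := insert_subset hy hX
  have hL1 := hL X hX
  have hL2 := hL _ hXE
  have hQ1 := hQf X hX
  have hQ2 := hQf _ hXE
  obtain ⟨⟨h0, hmono, hsub⟩, _⟩ := hN
  have hmapsub : X.map ι ⊆ (insert y X).map ι := map_subset_map.2 (subset_insert _ _)
  have hmapE : (insert y X).map ι ⊆ E.map ι := map_subset_map.2 hXE
  have hdisj' : Disjoint ((insert y X).map ι) F := hdisj.mono_left hmapE
  have hs := hsub ((insert y X).map ι) (X.map ι ∪ F)
    (hmapE.trans subset_union_left)
    (union_subset ((map_subset_map.2 hX).trans subset_union_left) subset_union_right)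
  have hU : (insert y X).map ι ∪ (X.map ι ∪ F) = (insert y X).map ι ∪ F := by
    rw [← union_assoc, union_eq_left.mpr hmapsub]
  have hI : (insert y X).map ι ∩ (X.map ι ∪ F) = X.map ι := by
    rw [inter_union_distrib_left, inter_eq_right.mpr hmapsub,
      disjoint_iff_inter_eq_empty.mp hdisj', union_empty]
  rw [hU, hI] at hs
  rw [hL1, hL2, hQ1, hQ2]
  linarith

lemma sum_ite_lt (k m : ℕ) (hm : m ≤ k) :
    ∑ i ∈ Finset.range k, (if i < m then (1:ℤ) else 0) = m := by
  rw [← Finset.sum_subset (Finset.range_subset_range.2 hm)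
    (by intro x hx hxm; simp only [Finset.mem_range] at hxm; simp [hxm])]
  rw [Finset.sum_ite_of_true (by intro x hx; exact Finset.mem_range.mp hx)]
  simp

lemma incr_char [DecidableEq α] {k : ℕ} {E : Finset α} {ρ : Finset α → ℤ}
    {M : Fin k → Finset α → ℤ}
    (hMR : ∀ s, IsMatroidRankOn E (M s))
    (hsum : ∀ X ⊆ E, ρ X = ∑ s, M s X)
    (hq : ∀ (s : Fin k) (h : (s : ℕ) + 1 < k), IsQuotientOn E (M ⟨(s : ℕ) + 1, h⟩) (M s))
    {X : Finset α} {y : α} (hX : X ⊆ E) (hy : y ∈ E) (hyX : y ∉ X) (s : Fin k) :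
    M s (insert y X) =
      if ρ X + ((s : ℕ) : ℤ) + 1 ≤ ρ (insert y X) then M s X + 1 else M s X := by
  set d : Fin k → ℤ := fun t => M t (insert y X) - M t X with hd
  have h01 : ∀ t, d t = 0 ∨ d t = 1 := by
    intro t
    have := rank_insert_bounds (hMR t) hX hy hyX
    simp only [hd]
    omega
  have hanti1 : ∀ (t : Fin k) (h : (t : ℕ) + 1 < k), d ⟨(t : ℕ) + 1, h⟩ ≤ d t := by
    intro t h
    exact quotient_step (hq t h) hX hy
  have hanti : ∀ n (hn : n < k), ∀ m (hm : m < k), m ≤ n → d ⟨n, hn⟩ ≤ d ⟨m, hm⟩ := by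
    intro n
    induction n with
    | zero =>
      intro hn m hm hmn
      have : m = 0 := Nat.le_zero.mp hmn
      subst this; exact le_refl _
    | succ n ih =>
      intro hn m hm hmn
      rcases Nat.lt_or_ge m (n + 1) with h' | h'
      · have hstep : d ⟨n + 1, hn⟩ ≤ d ⟨n, by omega⟩ := hanti1 ⟨n, by omega⟩ hn
        exact hstep.trans (ih (by omega) m hm (by omega))
      · have : m = n + 1 := by omega
        subst this; exact le_refl _
  have hsumd : ∑ t, d t = ρ (insert y X) - ρ X := by
    simp only [hd]
    rw [Finset.sum_sub_distrib, ← hsum X hX, ← hsum _ (insert_subset hy hX)]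
  by_cases hc : ρ X + ((s : ℕ) : ℤ) + 1 ≤ ρ (insert y X)
  · rw [if_pos hc]
    rcases h01 s with h0 | h1
    · exfalso
      have hle : ∀ t : Fin k, d t ≤ if (t : ℕ) < (s : ℕ) then (1:ℤ) else 0 := by
        intro t
        by_cases ht : (t : ℕ) < (s : ℕ)
        · rw [if_pos ht]; rcases h01 t with h | h <;> omega
        · rw [if_neg ht]
          have := hanti t t.isLt s s.isLt (by omega)
          simp only [Fin.eta] at this
          omega
      have hb : ∑ t, d t ≤ ∑ t : Fin k, (if (t : ℕ) < (s : ℕ) then (1:ℤ) else 0) :=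
        Finset.sum_le_sum fun t _ => hle t
      rw [Fin.sum_univ_eq_sum_range (fun i => if i < (s : ℕ) then (1:ℤ) else 0) k,
        sum_ite_lt k (s : ℕ) (le_of_lt s.isLt)] at hb
      omega
    · simp only [hd] at h1; omega
  · rw [if_neg hc]
    rcases h01 s with h0 | h1
    · simp only [hd] at h0; omega
    · exfalso
      have hge : ∀ t : Fin k, (if (t : ℕ) < (s : ℕ) + 1 then (1:ℤ) else 0) ≤ d t := by
        intro t
        by_cases ht : (t : ℕ) < (s : ℕ) + 1
        · rw [if_pos ht]
          have := hanti s s.isLt t t.isLt (by omega)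
          simp only [Fin.eta] at this
          omega
        · rw [if_neg ht]; rcases h01 t with h | h <;> omega
      have hb : ∑ t : Fin k, (if (t : ℕ) < (s : ℕ) + 1 then (1:ℤ) else 0) ≤ ∑ t, d t :=
        Finset.sum_le_sum fun t _ => hge t
      rw [Fin.sum_univ_eq_sum_range (fun i => if i < (s : ℕ) + 1 then (1:ℤ) else 0) k,
        sum_ite_lt k ((s : ℕ) + 1) s.isLt] at hb
      push_cast at hb
      omega

lemma matroid_empty {β : Type*} [DecidableEq β] {E : Finset β} {r : Finset β → ℤ}
    (h : IsMatroidRankOn E r) : r ∅ = 0 := h.1.1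

lemma unique_aux [DecidableEq α] {k : ℕ} {E : Finset α} {ρ : Finset α → ℤ}
    {M M' : Fin k → Finset α → ℤ}
    (hM : (∀ s, IsMatroidRankOn E (M s)) ∧ (∀ X ⊆ E, ρ X = ∑ s, M s X) ∧
      ∀ (s : Fin k) (h : (s : ℕ) + 1 < k), IsQuotientOn E (M ⟨(s : ℕ) + 1, h⟩) (M s))
    (hM' : (∀ s, IsMatroidRankOn E (M' s)) ∧ (∀ X ⊆ E, ρ X = ∑ s, M' s X) ∧
      ∀ (s : Fin k) (h : (s : ℕ) + 1 < k), IsQuotientOn E (M' ⟨(s : ℕ) + 1, h⟩) (M' s)) :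
    ∀ X, X ⊆ E → ∀ s : Fin k, M s X = M' s X := by
  intro X
  induction X using Finset.strongInduction with
  | _ X ih =>
    intro hX s
    rcases X.eq_empty_or_nonempty with rfl | ⟨y, hy⟩
    · rw [matroid_empty (hM.1 s), matroid_empty (hM'.1 s)]
    · have hX' : X.erase y ⊆ E := (Finset.erase_subset _ _).trans hX
      have h1 := incr_char hM.1 hM.2.1 hM.2.2 hX' (hX hy) (Finset.notMem_erase y X) s
      have h2 := incr_char hM'.1 hM'.2.1 hM'.2.2 hX' (hX hy) (Finset.notMem_erase y X) s
      rw [Finset.insert_erase hy] at h1 h2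
      rw [h1, h2, ih (X.erase y) (Finset.erase_ssubset hy) hX' s]

theorem stmt19 [DecidableEq α] (k : ℕ) (hk : 2 ≤ k)
    (E : Finset α) (ρ : Finset α → ℤ)
    (hρ : IsPolymatroidOn E ρ)
    (hQ : MemQk k E ρ) :
    (∃ M : Fin k → Finset α → ℤ,
      (∀ s, IsMatroidRankOn E (M s)) ∧
      (∀ X ⊆ E, ρ X = ∑ s, M s X) ∧
      (∀ (s : Fin k) (h : (s : ℕ) + 1 < k),
        IsQuotientOn E (M ⟨(s : ℕ) + 1, h⟩) (M s)) ∧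
      (∀ s, M s ∅ = 0) ∧
      (∀ s : Fin k, ∀ X ⊆ E, ∀ y ∈ E, y ∉ X →
        M s (insert y X) =
          if ρ X + ((s : ℕ) : ℤ) + 1 ≤ ρ (insert y X) then M s X + 1 else M s X)) ∧
    (∀ M M' : Fin k → Finset α → ℤ,
      ((∀ s, IsMatroidRankOn E (M s)) ∧ (∀ X ⊆ E, ρ X = ∑ s, M s X) ∧
        ∀ (s : Fin k) (h : (s : ℕ) + 1 < k),
          IsQuotientOn E (M ⟨(s : ℕ) + 1, h⟩) (M s)) →
      ((∀ s, IsMatroidRankOn E (M' s)) ∧ (∀ X ⊆ E, ρ X = ∑ s, M' s X) ∧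
        ∀ (s : Fin k) (h : (s : ℕ) + 1 < k),
          IsQuotientOn E (M' ⟨(s : ℕ) + 1, h⟩) (M' s)) →
      ∀ s : Fin k, ∀ X ⊆ E, M s X = M' s X) := by
  constructor
  · obtain ⟨M, hMR, hsum, hq⟩ := hQ
    refine ⟨M, hMR, hsum, hq, fun s => matroid_empty (hMR s), ?_⟩
    intro s X hX y hy hyX
    exact incr_char hMR hsum hq hX hy hyX s
  · intro M M' hM hM' s X hX
    exact unique_aux hM hM' X hX s
end
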